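/- arXiv:2012.05813 — 6 statements merged into one kernel-verified Lean document; each statement's English description precedes it below -/
import Mathlib

section
/- Let i ≥ 1 and define P_i(ω) = Σ_{s=0}^{i-1} (4ω)^{i-1-s} * C(2s,s) (so P_i is a polynomial in ω of degree i-1 with P_{i+1}(ω) = 4ω P_i(ω) + C(2i,i)). Then P_i(1) = (i/2) * C(2i,i) and P_i'(1) = (i(i-1)/3) * C(2i,i). -/
/-- `P_i(ω) = ∑_{s=0}^{i-1} (4ω)^{i-1-s} C(2s,s)`, so that `P_0 = 0` and
`P_{i+1}(ω) = 4ω P_i(ω) + C(2i,i)`. -/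
noncomputable def Ppoly (i : ℕ) (ω : ℝ) : ℝ :=
  ∑ s ∈ Finset.range i, (4 * ω) ^ (i - 1 - s) * (Nat.choose (2 * s) s : ℝ)

lemma choose_step (n : ℕ) :
    ((n:ℝ)+1) * (Nat.choose (2*(n+1)) (n+1) : ℝ)
      = 2 * (2*(n:ℝ)+1) * (Nat.choose (2*n) n : ℝ) := by
  have h := Nat.succ_mul_centralBinom_succ n
  rw [Nat.centralBinom, Nat.centralBinom] at h
  have h' := congrArg (fun x : ℕ => (x:ℝ)) h
  push_cast at h'
  linarith [h']

lemma sumA (i : ℕ) :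
    ∑ s ∈ Finset.range i, (4:ℝ) ^ (i - 1 - s) * (Nat.choose (2*s) s : ℝ)
      = (i:ℝ)/2 * (Nat.choose (2*i) i : ℝ) := by
  induction i with
  | zero => simp
  | succ n ih =>
    rw [Finset.sum_range_succ]
    have h1 : ∀ s ∈ Finset.range n, (4:ℝ)^(n+1-1-s) * (Nat.choose (2*s) s:ℝ)
        = 4 * ((4:ℝ)^(n-1-s) * (Nat.choose (2*s) s:ℝ)) := by
      intro s hs
      rw [Finset.mem_range] at hs
      have hh : n + 1 - 1 - s = (n - 1 - s) + 1 := by omega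
      rw [hh, pow_succ]; ring
    rw [Finset.sum_congr rfl h1, ← Finset.mul_sum, ih]
    have hc := choose_step n
    rw [show n+1-1-n = 0 from by omega, pow_zero, one_mul]
    push_cast
    linear_combination (-(1:ℝ)/2) * hc

lemma sumB (i : ℕ) :
    ∑ s ∈ Finset.range i, ((i - 1 - s : ℕ):ℝ) * (4:ℝ) ^ (i - 1 - s) * (Nat.choose (2*s) s : ℝ)
      = (i:ℝ) * ((i:ℝ)-1)/3 * (Nat.choose (2*i) i : ℝ) := by
  induction i with
  | zero => simp
  | succ n ih =>
    rw [Finset.sum_range_succ]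
    have h1 : ∀ s ∈ Finset.range n,
        ((n+1-1-s : ℕ):ℝ) * (4:ℝ)^(n+1-1-s) * (Nat.choose (2*s) s:ℝ)
        = 4 * (((n-1-s : ℕ):ℝ) * (4:ℝ)^(n-1-s) * (Nat.choose (2*s) s:ℝ))
          + 4 * ((4:ℝ)^(n-1-s) * (Nat.choose (2*s) s:ℝ)) := by
      intro s hs
      rw [Finset.mem_range] at hs
      have hh : n + 1 - 1 - s = (n - 1 - s) + 1 := by omega
      rw [hh, pow_succ]
      push_cast
      ring
    rw [Finset.sum_congr rfl h1, Finset.sum_add_distrib, ← Finset.mul_sum, ← Finset.mul_sum,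
      ih, sumA n]
    have hc := choose_step n
    rw [show n+1-1-n = 0 from by omega]
    simp only [Nat.cast_zero, pow_zero, zero_mul, one_mul, add_zero]
    push_cast
    linear_combination (-(n:ℝ)/3) * hc

lemma hasDeriv (i : ℕ) : HasDerivAt (Ppoly i)
    (∑ s ∈ Finset.range i, ((i - 1 - s : ℕ):ℝ) * (4:ℝ) ^ (i - 1 - s) * (Nat.choose (2*s) s : ℝ)) 1 := by
  unfold Ppoly
  apply HasDerivAt.fun_sum
  intro s hs
  have h0 : HasDerivAt (fun ω : ℝ => 4 * ω) 4 1 := by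
    simpa using (hasDerivAt_id (1:ℝ)).const_mul 4
  have h1 : HasDerivAt (fun ω : ℝ => (4 * ω) ^ (i - 1 - s))
      (((i - 1 - s : ℕ):ℝ) * (4 * 1) ^ (i - 1 - s - 1) * 4) 1 := h0.pow _
  have h2 := h1.mul_const (Nat.choose (2*s) s : ℝ)
  refine h2.congr_deriv ?_
  rcases Nat.eq_zero_or_pos (i - 1 - s) with h | h
  · simp [h]
  · have : i - 1 - s = (i - 1 - s - 1) + 1 := by omega
    rw [this]
    push_cast
    ring

/-- For `i ≥ 1`, `P_i(1) = (i/2) C(2i,i)` and `P_i'(1) = (i(i-1)/3) C(2i,i)`. -/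
theorem statement4 (i : ℕ) (hi : 1 ≤ i) :
    Ppoly i 1 = (i : ℝ) / 2 * (Nat.choose (2 * i) i : ℝ) ∧
    deriv (Ppoly i) 1 = (i : ℝ) * ((i : ℝ) - 1) / 3 * (Nat.choose (2 * i) i : ℝ) := by
  constructor
  · unfold Ppoly
    simp only [mul_one]
    exact sumA i
  · rw [(hasDeriv i).deriv, sumB i]
end

section
/- Let i ≥ 2 and let P_i(ω) = Σ_{s=0}^{i-1} (4ω)^{i-1-s} C(2s,s), and define G_i(ω) = P_i(ω)² - C(2i-1, i-1) * (P_i(ω) + (3/2) P_i'(ω)). Then G_i(1) = 0 and G_i(ω) > 0 for all real ω > 1. -/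
/-- `G_i(ω) = P_i(ω)² - C(2i-1,i-1) (P_i(ω) + (3/2) P_i'(ω))`. -/
noncomputable def Gpoly (i : ℕ) (ω : ℝ) : ℝ :=
  Ppoly i ω ^ 2 -
    (Nat.choose (2 * i - 1) (i - 1) : ℝ) * (Ppoly i ω + 3 / 2 * deriv (Ppoly i) ω)


noncomputable def Qpoly (i : ℕ) (ω : ℝ) : ℝ :=
  ∑ s ∈ Finset.range i,
    (((i - 1 - s : ℕ) : ℝ) * (4 * ω) ^ (i - 1 - s - 1) * 4) * (Nat.choose (2 * s) s : ℝ)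

noncomputable def Rpoly (i : ℕ) (ω : ℝ) : ℝ :=
  ∑ s ∈ Finset.range i,
    (((i - 1 - s : ℕ) : ℝ) * (((i - 1 - s - 1 : ℕ) : ℝ) * (4 * ω) ^ (i - 1 - s - 1 - 1) * 4) * 4)
      * (Nat.choose (2 * s) s : ℝ)

lemma hasDerivAt_four_mul (ω : ℝ) : HasDerivAt (fun ω : ℝ => 4 * ω) 4 ω := by
  simpa using (hasDerivAt_id ω).const_mul (4 : ℝ)

lemma hasDerivAt_Ppoly (i : ℕ) (ω : ℝ) : HasDerivAt (Ppoly i) (Qpoly i ω) ω := by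
  unfold Ppoly Qpoly
  apply HasDerivAt.fun_sum
  intro s _
  exact ((hasDerivAt_four_mul ω).pow _).mul_const _

lemma hasDerivAt_Qpoly (i : ℕ) (ω : ℝ) : HasDerivAt (Qpoly i) (Rpoly i ω) ω := by
  unfold Qpoly Rpoly
  apply HasDerivAt.fun_sum
  intro s _
  exact (((((hasDerivAt_four_mul ω).pow _).const_mul _)).mul_const 4).mul_const _

lemma deriv_Ppoly (i : ℕ) : deriv (Ppoly i) = Qpoly i :=
  funext fun ω => (hasDerivAt_Ppoly i ω).deriv

lemma key_nat (n : ℕ) : ((n:ℝ) + 1) * (Nat.choose (2*n+1) n : ℝ)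
    = (2*n+1) * (Nat.choose (2*n) n : ℝ) := by
  have h1 : Nat.choose (2*n+1) n = Nat.choose (2*n+1) (n+1) := by
    have := Nat.choose_symm (n := 2*n+1) (k := n+1) (by omega)
    simpa [show 2*n+1-(n+1) = n by omega] using this
  have h2 := Nat.add_one_mul_choose_eq (2*n) n
  have h3 : (n+1) * Nat.choose (2*n+1) n = (2*n+1) * Nat.choose (2*n) n := by
    rw [h1, Nat.mul_comm]
    exact h2.symm
  have := congrArg (Nat.cast (R := ℝ)) h3
  push_cast at this
  linarith [this]

lemma cb_key (n : ℕ) : ((n:ℝ)+1) * (Nat.choose (2*(n+1)) (n+1) : ℝ)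
    = 2 * (2*n+1) * (Nat.choose (2*n) n : ℝ) := by
  have := Nat.succ_mul_centralBinom_succ n
  have h : (n+1) * Nat.centralBinom (n+1) = 2*(2*n+1) * Nat.centralBinom n := by
    simpa [Nat.succ_eq_add_one] using this
  have := congrArg (Nat.cast (R := ℝ)) h
  push_cast at this
  simpa [Nat.centralBinom] using this

lemma sumS (n : ℕ) : ∑ s ∈ Finset.range (n+1), (4:ℝ)^(n-s) * (Nat.choose (2*s) s : ℝ)
    = (2*n+1) * (Nat.choose (2*n) n : ℝ) := by
  induction n with
  | zero => simp
  | succ n ih =>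
    rw [Finset.sum_range_succ]
    have hc : ∀ s ∈ Finset.range (n+1), (4:ℝ)^(n+1-s) * (Nat.choose (2*s) s : ℝ)
        = 4 * ((4:ℝ)^(n-s) * (Nat.choose (2*s) s : ℝ)) := by
      intro s hs
      rw [Finset.mem_range] at hs
      rw [show n+1-s = (n-s)+1 by omega, pow_succ]
      ring
    rw [Finset.sum_congr rfl hc, ← Finset.mul_sum, ih]
    have := cb_key n
    simp only [Nat.sub_self, pow_zero, one_mul]
    push_cast
    linear_combination (-2 : ℝ) * this

lemma sumT (n : ℕ) : 3 * ∑ s ∈ Finset.range (n+1), ((n-s : ℕ):ℝ) * (4:ℝ)^(n-s) * (Nat.choose (2*s) s : ℝ)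
    = 2*n*(2*n+1) * (Nat.choose (2*n) n : ℝ) := by
  induction n with
  | zero => simp
  | succ n ih =>
    rw [Finset.sum_range_succ]
    have hc : ∀ s ∈ Finset.range (n+1), ((n+1-s : ℕ):ℝ) * (4:ℝ)^(n+1-s) * (Nat.choose (2*s) s : ℝ)
        = 4 * (((n-s : ℕ):ℝ) * (4:ℝ)^(n-s) * (Nat.choose (2*s) s : ℝ))
          + 4 * ((4:ℝ)^(n-s) * (Nat.choose (2*s) s : ℝ)) := by
      intro s hs
      rw [Finset.mem_range] at hs
      rw [show n+1-s = (n-s)+1 by omega, pow_succ]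
      push_cast
      ring
    rw [Finset.sum_congr rfl hc, Finset.sum_add_distrib, ← Finset.mul_sum, ← Finset.mul_sum,
      sumS n]
    simp only [Nat.sub_self, Nat.cast_zero, pow_zero, zero_mul, mul_one, add_zero]
    push_cast
    linear_combination (4:ℝ)*ih - 2*(2*(n:ℝ)+3) * cb_key n

lemma Ppoly_one (n : ℕ) : Ppoly (n+1) 1 = (2*n+1) * (Nat.choose (2*n) n : ℝ) := by
  rw [← sumS n]
  unfold Ppoly
  refine Finset.sum_congr rfl fun s hs => ?_
  norm_num [show n+1-1-s = n-s by omega]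

lemma Qpoly_one (n : ℕ) :
    3 * Qpoly (n+1) 1 = 2*n*(2*n+1) * (Nat.choose (2*n) n : ℝ) := by
  rw [← sumT n]
  unfold Qpoly
  congr 1
  refine Finset.sum_congr rfl fun s hs => ?_
  rw [Finset.mem_range] at hs
  rcases Nat.eq_or_lt_of_le (Nat.lt_succ_iff.mp hs) with h | h
  · simp [show n+1-1-s = 0 by omega, show n - s = 0 by omega]
  · rw [show n+1-1-s = n-s by omega]
    obtain ⟨d, hd⟩ : ∃ d, n - s = d + 1 := ⟨n-s-1, by omega⟩
    rw [hd]
    simp only [mul_one, Nat.add_sub_cancel, pow_succ]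
    push_cast
    ring

lemma Gpoly_one (n : ℕ) : Gpoly (n+1) 1 = 0 := by
  have hP := Ppoly_one n
  have hQ := Qpoly_one n
  have hk := key_nat n
  unfold Gpoly
  rw [deriv_Ppoly, hP, show 2*(n+1)-1 = 2*n+1 by omega, show n+1-1 = n by omega]
  linear_combination (-(2*(n:ℝ)+1) * (Nat.choose (2*n) n : ℝ)) * hk
    - (1/2) * (Nat.choose (2*n+1) n : ℝ) * hQ

lemma Ppoly_lower (n : ℕ) (ω : ℝ) (hω : 1 ≤ ω) :
    (2*(n:ℝ)+1) * (Nat.choose (2*n) n : ℝ) ≤ Ppoly (n+1) ω := by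
  rw [← Ppoly_one n]
  unfold Ppoly
  refine Finset.sum_le_sum fun s _ => ?_
  refine mul_le_mul_of_nonneg_right ?_ (Nat.cast_nonneg _)
  exact pow_le_pow_left₀ (by norm_num) (by linarith) _

lemma Qpoly_pos (n : ℕ) (hn : 1 ≤ n) (ω : ℝ) (hω : 1 ≤ ω) : 0 < Qpoly (n+1) ω := by
  have h4 : (0:ℝ) ≤ 4 * ω := by linarith
  unfold Qpoly
  refine Finset.sum_pos' (fun s _ => ?_) ⟨n-1, Finset.mem_range.mpr (by omega), ?_⟩
  · have := pow_nonneg h4 (n+1-1-s-1)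
    positivity
  · rw [show n+1-1-(n-1) = 1 by omega]
    have hcp : (0:ℝ) < (Nat.choose (2*(n-1)) (n-1) : ℝ) := by
      exact_mod_cast Nat.choose_pos (by omega)
    norm_num
    exact Nat.choose_pos (by omega)

lemma Rpoly_le (n : ℕ) (ω : ℝ) (hω : 1 ≤ ω) :
    Rpoly (n+1) ω ≤ (n:ℝ) * Qpoly (n+1) ω := by
  have h4 : (4:ℝ) ≤ 4 * ω := by linarith
  have h40 : (0:ℝ) ≤ 4 * ω := by linarith
  unfold Rpoly Qpoly
  rw [Finset.mul_sum]
  refine Finset.sum_le_sum fun s hs => ?_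
  rw [Finset.mem_range] at hs
  set c : ℝ := (Nat.choose (2*s) s : ℝ) with hc
  have hc0 : 0 ≤ c := Nat.cast_nonneg _
  rcases Nat.lt_or_ge (n+1-1-s) 2 with he | he
  · -- e ≤ 1 : LHS has factor (e-1) = 0
    have h1 : ((n+1-1-s-1 : ℕ) : ℝ) = 0 := by
      norm_cast; omega
    rw [h1]
    simp only [zero_mul, mul_zero]
    have := pow_nonneg h40 (n+1-1-s-1)
    positivity
  · obtain ⟨d, hd⟩ : ∃ d, n+1-1-s = d + 2 := ⟨n+1-1-s-2, by omega⟩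
    rw [hd]
    have hdn : (d:ℝ) + 1 ≤ (n:ℝ) := by
      have h' : d + 1 ≤ n := by omega
      exact_mod_cast h'
    have hp : (0:ℝ) ≤ (4*ω)^d := pow_nonneg h40 d
    rw [show d+2-1-1 = d by omega, show d+2-1 = d+1 by omega, pow_succ]
    push_cast
    have t1 : (0:ℝ) ≤ ((d:ℝ)+2) * (4*ω)^d * c := by positivity
    have t2 : ((d:ℝ)+1)*4 ≤ (n:ℝ)*(4*ω) := by
      nlinarith [hdn, h4, Nat.cast_nonneg (α := ℝ) n]
    nlinarith [mul_nonneg t1 (by linarith : (0:ℝ) ≤ (n:ℝ)*(4*ω) - ((d:ℝ)+1)*4)]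

lemma hasDerivAt_Gpoly (n : ℕ) (ω : ℝ) :
    HasDerivAt (Gpoly (n+1))
      (2 * Ppoly (n+1) ω * Qpoly (n+1) ω -
        (Nat.choose (2*(n+1)-1) ((n+1)-1) : ℝ) * (Qpoly (n+1) ω + 3/2 * Rpoly (n+1) ω)) ω := by
  have hGfun : Gpoly (n+1) = fun ω => Ppoly (n+1) ω ^ 2 -
      (Nat.choose (2*(n+1)-1) ((n+1)-1) : ℝ) * (Ppoly (n+1) ω + 3/2 * Qpoly (n+1) ω) := by
    funext x
    unfold Gpoly
    rw [deriv_Ppoly]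
  rw [hGfun]
  have hP := hasDerivAt_Ppoly (n+1) ω
  have hQ := hasDerivAt_Qpoly (n+1) ω
  have h := (hP.fun_pow 2).fun_sub (((hP.fun_add (hQ.const_mul (3/2))).const_mul
      ((Nat.choose (2*(n+1)-1) ((n+1)-1) : ℝ))))
  refine h.congr_deriv ?_
  push_cast
  ring

lemma deriv_Gpoly_pos (n : ℕ) (hn : 1 ≤ n) (ω : ℝ) (hω : 1 ≤ ω) :
    0 < deriv (Gpoly (n+1)) ω := by
  rw [(hasDerivAt_Gpoly n ω).deriv]
  set C : ℝ := (Nat.choose (2*(n+1)-1) ((n+1)-1) : ℝ) with hC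
  have hCval : ((n:ℝ)+1) * C = (2*(n:ℝ)+1) * (Nat.choose (2*n) n : ℝ) := by
    rw [hC, show 2*(n+1)-1 = 2*n+1 by omega, show (n+1)-1 = n by omega]
    exact key_nat n
  have hC0 : 0 < C := by
    rw [hC]
    exact_mod_cast Nat.choose_pos (by omega)
  have hPl := Ppoly_lower n ω hω
  have hQp := Qpoly_pos n hn ω hω
  have hRl := Rpoly_le n ω hω
  have hcb : (0:ℝ) ≤ (Nat.choose (2*n) n : ℝ) := Nat.cast_nonneg _
  -- 2P > C*(1 + 3/2*n)
  have hgap : C * (1 + 3/2*(n:ℝ)) < 2 * Ppoly (n+1) ω := by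
    nlinarith [hCval, hPl, hC0, hcb, Nat.cast_nonneg (α := ℝ) n]
  have h1 : C * (3/2 * Rpoly (n+1) ω) ≤ C * (3/2 * ((n:ℝ) * Qpoly (n+1) ω)) := by
    apply mul_le_mul_of_nonneg_left _ (le_of_lt hC0)
    linarith
  nlinarith [mul_pos hQp (show (0:ℝ) < 2 * Ppoly (n+1) ω - C * (1 + 3/2*(n:ℝ)) by linarith)]

/-- For `i ≥ 2`, `G_i(1) = 0` and `G_i(ω) > 0` for all real `ω > 1`. -/
theorem statement5 (i : ℕ) (hi : 2 ≤ i) :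
    Gpoly i 1 = 0 ∧ ∀ ω : ℝ, 1 < ω → 0 < Gpoly i ω := by
  obtain ⟨n, rfl⟩ : ∃ n, i = n + 1 := ⟨i - 1, by omega⟩
  have hn : 1 ≤ n := by omega
  refine ⟨Gpoly_one n, fun ω hω => ?_⟩
  have hmono : StrictMonoOn (Gpoly (n+1)) (Set.Ici 1) := by
    apply strictMonoOn_of_deriv_pos (convex_Ici 1)
    · exact fun x _ => (hasDerivAt_Gpoly n x).differentiableAt.continuousAt.continuousWithinAt
    · intro x hx
      rw [interior_Ici] at hx
      exact deriv_Gpoly_pos n hn x (le_of_lt hx)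
  have := hmono (Set.self_mem_Ici) (Set.mem_Ici.mpr (le_of_lt hω)) hω
  rwa [Gpoly_one n] at this
end

section
/- Let ν be a probability measure on ℤ with finite mean and Σ_{i∈ℤ} i ν(i) > 0, and let (X_n) be the random walk with step distribution ν started at 0. Then for every ε > 0 there exist C and p_0 such that for all p ≥ p_0, the probability that X never hits the interval [p, p+C] is at most ε. -/
open MeasureTheory ProbabilityTheory Filter Finset Topology
open scoped ENNReal

set_option linter.unusedSectionVars false

namespace RW6

variable {Ω : Type*} [MeasurableSpace Ω] (P : Measure Ω) [IsProbabilityMeasure P]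
  (ξ : ℕ → Ω → ℤ)

/-- block of `M` steps starting at index `m` -/
def blk (m M : ℕ) : Ω → Fin M → ℤ := fun ω i => ξ (m + i) ω

/-- partial sum of the first `k` coordinates of a finite vector -/
def FS {M : ℕ} (b : Fin M → ℤ) (k : ℕ) : ℤ :=
  ∑ i ∈ Finset.univ.filter (fun i : Fin M => (i : ℕ) < k), b i

/-- the walk -/
def Xs (n : ℕ) (ω : Ω) : ℤ := ∑ k ∈ Finset.range n, ξ k ω

/-- point masses of the step distribution -/
def θ (i : ℤ) : ℝ≥0∞ := P {ω | ξ 0 ω = i}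

lemma measurableSet_all {α : Type*} [Countable α] [MeasurableSpace α]
    [MeasurableSingletonClass α] (S : Set α) : MeasurableSet S :=
  (Set.to_countable S).measurableSet

lemma measurable_blk (hmeas : ∀ n, Measurable (ξ n)) (m M : ℕ) :
    Measurable (blk ξ m M) :=
  measurable_pi_lambda _ fun i => hmeas (m + i)

lemma measurable_Xs (hmeas : ∀ n, Measurable (ξ n)) (n : ℕ) :
    Measurable (Xs ξ n) :=
  Finset.measurable_sum _ fun i _ => hmeas i

lemma FS_blk {m M k : ℕ} (hk : k ≤ M) (ω : Ω) :
    FS (blk ξ m M ω) k = ∑ i ∈ Finset.range k, ξ (m + i) ω := by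
  unfold FS blk
  rcases Nat.eq_zero_or_pos M with hM | hM
  · subst hM
    interval_cases k
    simp
  · refine Finset.sum_nbij' (i := fun a : Fin M => (a : ℕ))
      (j := fun a : ℕ => (⟨a % M, Nat.mod_lt a hM⟩ : Fin M)) ?_ ?_ ?_ ?_ ?_
    · intro a ha
      simp only [Finset.mem_filter, Finset.mem_univ, true_and] at ha
      exact Finset.mem_range.mpr ha
    · intro a ha
      have ha' : a < k := Finset.mem_range.mp ha
      simp only [Finset.mem_filter, Finset.mem_univ, true_and,
        Nat.mod_eq_of_lt (lt_of_lt_of_le ha' hk)]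
      exact ha'
    · intro a _
      exact Fin.ext (by simp [Nat.mod_eq_of_lt a.isLt])
    · intro a ha
      exact Nat.mod_eq_of_lt (lt_of_lt_of_le (Finset.mem_range.mp ha) hk)
    · intro a _
      rfl

lemma Xs_add (n t : ℕ) (ω : Ω) :
    Xs ξ (n + t) ω = Xs ξ n ω + ∑ i ∈ Finset.range t, ξ (n + i) ω := by
  induction t with
  | zero => simp [Xs]
  | succ t ih =>
      rw [← Nat.add_assoc, Xs, Finset.sum_range_succ, ← Xs, ih,
        Finset.sum_range_succ, add_assoc]

lemma theta_eq {ν : ℤ → ℝ} (n : ℕ) (i : ℤ)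
    (hlaw : ∀ n, ∀ i : ℤ, (P {ω | ξ n ω = i}).toReal = ν i) :
    P (ξ n ⁻¹' {i}) = θ P ξ i := by
  have h1 : P (ξ n ⁻¹' {i}) ≠ ∞ := measure_ne_top _ _
  have h2 : θ P ξ i ≠ ∞ := measure_ne_top _ _
  rw [← ENNReal.toReal_eq_toReal_iff' h1 h2]
  have e1 : (ξ n ⁻¹' {i}) = {ω | ξ n ω = i} := rfl
  have e2 : θ P ξ i = P {ω | ξ 0 ω = i} := rfl
  rw [e1, e2, hlaw n i, hlaw 0 i]


variable {ν : ℤ → ℝ}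

lemma atom (hindep : iIndepFun ξ P)
    (hlaw : ∀ n, ∀ i : ℤ, (P {ω | ξ n ω = i}).toReal = ν i)
    (m M : ℕ) (a : ℕ → ℤ) :
    P {ω | ∀ i < M, ξ (m + i) ω = a i} = ∏ i ∈ Finset.range M, θ P ξ (a i) := by
  have key := hindep.measure_inter_preimage_eq_mul (S := Finset.Ico m (m + M))
    (sets := fun j => ({a (j - m)} : Set ℤ)) (fun i _ => measurableSet_singleton _)
  have hset : (⋂ i ∈ Finset.Ico m (m + M), ξ i ⁻¹' {a (i - m)})
      = {ω | ∀ i < M, ξ (m + i) ω = a i} := by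
    ext ω
    simp only [Set.mem_iInter, Finset.mem_Ico, Set.mem_preimage, Set.mem_singleton_iff,
      Set.mem_setOf_eq]
    constructor
    · intro h i hi
      have := h (m + i) ⟨Nat.le_add_right _ _, by omega⟩
      simpa using this
    · intro h j hj
      obtain ⟨hj1, hj2⟩ := hj
      have := h (j - m) (by omega)
      rw [Nat.add_sub_cancel' hj1] at this
      exact this
  rw [hset] at key
  rw [key, Finset.prod_Ico_eq_prod_range]
  have : m + M - m = M := by omega
  rw [this]
  refine Finset.prod_congr rfl fun i _ => ?_
  rw [theta_eq P ξ _ _ hlaw]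
  congr 2
  omega

lemma atomFin (hindep : iIndepFun ξ P)
    (hlaw : ∀ n, ∀ i : ℤ, (P {ω | ξ n ω = i}).toReal = ν i)
    (m M : ℕ) (b : Fin M → ℤ) :
    P (blk ξ m M ⁻¹' {b}) = ∏ i : Fin M, θ P ξ (b i) := by
  classical
  set a : ℕ → ℤ := fun i => if h : i < M then b ⟨i, h⟩ else 0 with ha
  have hset : blk ξ m M ⁻¹' {b} = {ω | ∀ i < M, ξ (m + i) ω = a i} := by
    ext ω
    simp only [Set.mem_preimage, Set.mem_singleton_iff, Set.mem_setOf_eq, funext_iff, blk]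
    constructor
    · intro h i hi
      rw [ha]; simp only [hi, dif_pos]
      exact h ⟨i, hi⟩
    · intro h i
      have := h i i.isLt
      rw [ha] at this; simpa [i.isLt] using this
  rw [hset, atom P ξ hindep hlaw m M a, ← Fin.prod_univ_eq_prod_range]
  refine Finset.prod_congr rfl fun i _ => ?_
  congr 1
  rw [ha]; simp [i.isLt]

lemma meas_preimage {β : Type*} [Countable β] [MeasurableSpace β] [MeasurableSingletonClass β]
    {f : Ω → β} (hf : Measurable f) (S : Set β) :
    P (f ⁻¹' S) = ∑' b : S, P (f ⁻¹' {(b : β)}) := by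
  have h : f ⁻¹' S = ⋃ b : S, f ⁻¹' {(b : β)} := by
    ext ω; simp
  rw [h, measure_iUnion]
  · intro b b' hbb'
    refine Disjoint.preimage f ?_
    simp only [Set.disjoint_singleton]
    exact fun h => hbb' (Subtype.ext h)
  · exact fun b => hf (measurableSet_singleton _)

lemma meas_blk (hmeas : ∀ n, Measurable (ξ n))
    (hindep : iIndepFun ξ P)
    (hlaw : ∀ n, ∀ i : ℤ, (P {ω | ξ n ω = i}).toReal = ν i)
    (m M : ℕ) (S : Set (Fin M → ℤ)) :
    P (blk ξ m M ⁻¹' S) = ∑' b : S, ∏ i : Fin M, θ P ξ ((b : Fin M → ℤ) i) := by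
  rw [meas_preimage P (measurable_blk ξ hmeas m M) S]
  exact tsum_congr fun b => atomFin P ξ hindep hlaw m M b

lemma blk_shift (hmeas : ∀ n, Measurable (ξ n))
    (hindep : iIndepFun ξ P)
    (hlaw : ∀ n, ∀ i : ℤ, (P {ω | ξ n ω = i}).toReal = ν i)
    (m M : ℕ) (S : Set (Fin M → ℤ)) :
    P (blk ξ m M ⁻¹' S) = P (blk ξ 0 M ⁻¹' S) := by
  rw [meas_blk P ξ hmeas hindep hlaw m M S, meas_blk P ξ hmeas hindep hlaw 0 M S]


lemma pair_atom (hindep : iIndepFun ξ P)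
    (hlaw : ∀ n, ∀ i : ℤ, (P {ω | ξ n ω = i}).toReal = ν i)
    (n M : ℕ) (a : Fin n → ℤ) (b : Fin M → ℤ) :
    P (blk ξ 0 n ⁻¹' {a} ∩ blk ξ n M ⁻¹' {b})
      = (∏ i : Fin n, θ P ξ (a i)) * ∏ i : Fin M, θ P ξ (b i) := by
  classical
  set c : ℕ → ℤ := fun i =>
    if h : i < n then a ⟨i, h⟩ else if h' : i - n < M then b ⟨i - n, h'⟩ else 0 with hc
  have hset : blk ξ 0 n ⁻¹' {a} ∩ blk ξ n M ⁻¹' {b}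
      = {ω | ∀ i < n + M, ξ (0 + i) ω = c i} := by
    ext ω
    simp only [Set.mem_inter_iff, Set.mem_preimage, Set.mem_singleton_iff, funext_iff, blk,
      Set.mem_setOf_eq]
    constructor
    · rintro ⟨h1, h2⟩ i hi
      rw [hc]
      by_cases h : i < n
      · simp only [h, dif_pos]
        simpa using h1 ⟨i, h⟩
      · have h' : i - n < M := by omega
        simp only [h, dif_neg, not_false_iff, h', dif_pos]
        have := h2 ⟨i - n, h'⟩
        rw [show n + (⟨i - n, h'⟩ : Fin M).val = i by simp; omega] at this
        simpa using this
    · intro h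
      constructor
      · intro i
        have := h i (by omega)
        rw [hc] at this
        simpa [i.isLt] using this
      · intro i
        have := h (n + i) (by omega)
        rw [hc] at this
        simp only [show ¬ n + (i : ℕ) < n by omega, dif_neg, not_false_iff,
          Nat.add_sub_cancel_left, i.isLt, dif_pos] at this
        simpa using this
  rw [hset, atom P ξ hindep hlaw 0 (n + M) c, Finset.prod_range_add]
  congr 1
  · rw [← Fin.prod_univ_eq_prod_range]
    refine Finset.prod_congr rfl fun i _ => ?_
    congr 1
    rw [hc]; simp [i.isLt]
  · rw [← Fin.prod_univ_eq_prod_range]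
    refine Finset.prod_congr rfl fun i _ => ?_
    congr 1
    rw [hc]
    simp only [show ¬ n + (i : ℕ) < n by omega, dif_neg, not_false_iff,
      Nat.add_sub_cancel_left, i.isLt, dif_pos]

lemma L2 (hmeas : ∀ n, Measurable (ξ n))
    (hindep : iIndepFun ξ P)
    (hlaw : ∀ n, ∀ i : ℤ, (P {ω | ξ n ω = i}).toReal = ν i)
    (n M : ℕ) (A : Set (Fin n → ℤ)) (S : Set (Fin M → ℤ)) :
    P (blk ξ 0 n ⁻¹' A ∩ blk ξ n M ⁻¹' S)
      = P (blk ξ 0 n ⁻¹' A) * P (blk ξ 0 M ⁻¹' S) := by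
  classical
  set F : (Fin n → ℤ) → ℝ≥0∞ := fun a => ∏ i : Fin n, θ P ξ (a i) with hF
  set G : (Fin M → ℤ) → ℝ≥0∞ := fun b => ∏ i : Fin M, θ P ξ (b i) with hG
  set Ψ : Ω → (Fin n → ℤ) × (Fin M → ℤ) := fun ω => (blk ξ 0 n ω, blk ξ n M ω) with hΨ
  have hΨm : Measurable Ψ :=
    (measurable_blk ξ hmeas 0 n).prodMk (measurable_blk ξ hmeas n M)
  have hev : blk ξ 0 n ⁻¹' A ∩ blk ξ n M ⁻¹' S = Ψ ⁻¹' (A ×ˢ S) := by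
    ext ω; simp [hΨ, Set.mem_prod]
  rw [hev, meas_preimage P hΨm]
  have hfib : ∀ c : ↥(A ×ˢ S), P (Ψ ⁻¹' {(c : (Fin n → ℤ) × (Fin M → ℤ))})
      = F (c : (Fin n → ℤ) × (Fin M → ℤ)).1 * G (c : (Fin n → ℤ) × (Fin M → ℤ)).2 := by
    rintro ⟨⟨a, b⟩, hab⟩
    have : Ψ ⁻¹' {(a, b)} = blk ξ 0 n ⁻¹' {a} ∩ blk ξ n M ⁻¹' {b} := by
      ext ω; simp [hΨ, Prod.ext_iff]
    rw [this, pair_atom P ξ hindep hlaw n M a b]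
  calc (∑' c : ↥(A ×ˢ S), P (Ψ ⁻¹' {(c : (Fin n → ℤ) × (Fin M → ℤ))}))
      = ∑' c : ↥(A ×ˢ S), F (c : (Fin n → ℤ) × (Fin M → ℤ)).1
          * G (c : (Fin n → ℤ) × (Fin M → ℤ)).2 := tsum_congr hfib
    _ = ∑' c : (Fin n → ℤ) × (Fin M → ℤ), (A ×ˢ S).indicator (fun c => F c.1 * G c.2) c :=
        (_root_.tsum_subtype (A ×ˢ S) (fun c => F c.1 * G c.2))
    _ = ∑' (a : Fin n → ℤ) (b : Fin M → ℤ), (A ×ˢ S).indicator (fun c => F c.1 * G c.2) (a, b) :=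
        ENNReal.tsum_prod'
    _ = ∑' (a : Fin n → ℤ) (b : Fin M → ℤ), (A.indicator F a) * (S.indicator G b) := by
        refine tsum_congr fun a => tsum_congr fun b => ?_
        by_cases ha : a ∈ A <;> by_cases hb : b ∈ S <;>
          simp [Set.indicator_apply, Set.mem_prod, ha, hb]
    _ = (∑' a : Fin n → ℤ, A.indicator F a) * ∑' b : Fin M → ℤ, S.indicator G b := by
        rw [← ENNReal.tsum_mul_right]
        exact tsum_congr fun a => ENNReal.tsum_mul_left
    _ = (∑' a : ↥A, F (a : Fin n → ℤ)) * ∑' b : ↥S, G (b : Fin M → ℤ) := by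
        rw [_root_.tsum_subtype, _root_.tsum_subtype]
    _ = P (blk ξ 0 n ⁻¹' A) * P (blk ξ 0 M ⁻¹' S) := by
        rw [meas_blk P ξ hmeas hindep hlaw 0 n A, meas_blk P ξ hmeas hindep hlaw 0 M S]


/-- vectors whose partial sums never return to 0 within the horizon -/
def NRset (M : ℕ) : Set (Fin M → ℤ) := {b | ∀ k, 1 ≤ k → k ≤ M → FS b k ≠ 0}

/-- the increments after time `n` never sum to zero -/
def NRfull (n : ℕ) : Set Ω := ⋂ M, blk ξ n M ⁻¹' NRset M

/-- probability of never returning to the current position -/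
def ρ : ℝ≥0∞ := P (NRfull ξ 0)

lemma charNRM (n M : ℕ) :
    blk ξ n M ⁻¹' NRset M
      = {ω | ∀ k, 1 ≤ k → k ≤ M → (∑ i ∈ Finset.range k, ξ (n + i) ω) ≠ 0} := by
  ext ω
  simp only [Set.mem_preimage, NRset, Set.mem_setOf_eq]
  constructor
  · intro h k hk1 hk2
    rw [← FS_blk ξ hk2 ω]
    exact h k hk1 hk2
  · intro h k hk1 hk2
    rw [FS_blk ξ hk2 ω]
    exact h k hk1 hk2

lemma mem_NRfull {n : ℕ} {ω : Ω} :
    ω ∈ NRfull ξ n ↔ ∀ k, 1 ≤ k → (∑ i ∈ Finset.range k, ξ (n + i) ω) ≠ 0 := by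
  simp only [NRfull, Set.mem_iInter]
  constructor
  · intro h k hk1
    have := h k
    rw [charNRM] at this
    exact this k hk1 le_rfl
  · intro h M
    rw [charNRM]
    exact fun k hk1 _ => h k hk1

lemma measurable_NRfull (hmeas : ∀ n, Measurable (ξ n)) (n : ℕ) :
    MeasurableSet (NRfull ξ n) :=
  MeasurableSet.iInter fun M => measurable_blk ξ hmeas n M (measurableSet_all _)

lemma L2inf (hmeas : ∀ n, Measurable (ξ n))
    (hindep : iIndepFun ξ P)
    (hlaw : ∀ n, ∀ i : ℤ, (P {ω | ξ n ω = i}).toReal = ν i)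
    (n : ℕ) (A : Set (Fin n → ℤ)) :
    P (blk ξ 0 n ⁻¹' A ∩ NRfull ξ n) = P (blk ξ 0 n ⁻¹' A) * ρ P ξ := by
  have hAnti : ∀ n', Antitone (fun M => blk ξ n' M ⁻¹' NRset M) := by
    intro n' M M' hMM' ω hω
    replace hω : ω ∈ blk ξ n' M' ⁻¹' NRset M' := hω
    show ω ∈ blk ξ n' M ⁻¹' NRset M
    rw [charNRM] at hω ⊢
    exact fun k hk1 hk2 => hω k hk1 (le_trans hk2 hMM')
  have hAnti2 : Antitone (fun M => blk ξ 0 n ⁻¹' A ∩ blk ξ n M ⁻¹' NRset M) :=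
    fun M M' hMM' => Set.inter_subset_inter_right _ (hAnti n hMM')
  have h1 : Tendsto (fun M => P (blk ξ 0 n ⁻¹' A ∩ blk ξ n M ⁻¹' NRset M)) atTop
      (𝓝 (P (blk ξ 0 n ⁻¹' A ∩ NRfull ξ n))) := by
    have he : blk ξ 0 n ⁻¹' A ∩ NRfull ξ n
        = ⋂ M, (blk ξ 0 n ⁻¹' A ∩ blk ξ n M ⁻¹' NRset M) := by
      rw [NRfull, Set.inter_iInter]
    rw [he]
    exact tendsto_measure_iInter_atTop
      (fun M => ((measurable_blk ξ hmeas 0 n (measurableSet_all A)).inter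
        (measurable_blk ξ hmeas n M (measurableSet_all _))).nullMeasurableSet)
      hAnti2 ⟨0, measure_ne_top _ _⟩
  have h0 : Tendsto (fun M => P (blk ξ 0 M ⁻¹' NRset M)) atTop (𝓝 (ρ P ξ)) := by
    have : ρ P ξ = P (⋂ M, blk ξ 0 M ⁻¹' NRset M) := rfl
    rw [this]
    exact tendsto_measure_iInter_atTop
      (fun M => (measurable_blk ξ hmeas 0 M (measurableSet_all _)).nullMeasurableSet)
      (hAnti 0) ⟨0, measure_ne_top _ _⟩
  have h2 : Tendsto (fun M => P (blk ξ 0 n ⁻¹' A) * P (blk ξ 0 M ⁻¹' NRset M)) atTop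
      (𝓝 (P (blk ξ 0 n ⁻¹' A) * ρ P ξ)) :=
    ENNReal.Tendsto.const_mul h0 (Or.inr (measure_ne_top _ _))
  have heq : (fun M => P (blk ξ 0 n ⁻¹' A ∩ blk ξ n M ⁻¹' NRset M))
      = fun M => P (blk ξ 0 n ⁻¹' A) * P (blk ξ 0 M ⁻¹' NRset M) := by
    funext M
    exact L2 P ξ hmeas hindep hlaw n M A (NRset M)
  rw [heq] at h1
  exact tendsto_nhds_unique h1 h2

/-- last visit to `x` at time `n` -/
def Lset (x : ℤ) (n : ℕ) : Set Ω := {ω | Xs ξ n ω = x} ∩ NRfull ξ n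

lemma FS_blk_zero (n : ℕ) (ω : Ω) : FS (blk ξ 0 n ω) n = Xs ξ n ω := by
  rw [FS_blk ξ le_rfl ω]
  exact Finset.sum_congr rfl fun i _ => by rw [zero_add]

lemma Xs_set_eq (n : ℕ) (x : ℤ) :
    {ω | Xs ξ n ω = x} = blk ξ 0 n ⁻¹' {a : Fin n → ℤ | FS a n = x} := by
  ext ω
  simp only [Set.mem_setOf_eq, Set.mem_preimage, FS_blk_zero]

lemma P_Lset (hmeas : ∀ n, Measurable (ξ n))
    (hindep : iIndepFun ξ P)
    (hlaw : ∀ n, ∀ i : ℤ, (P {ω | ξ n ω = i}).toReal = ν i)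
    (x : ℤ) (n : ℕ) :
    P (Lset ξ x n) = P {ω | Xs ξ n ω = x} * ρ P ξ := by
  rw [Lset, Xs_set_eq, L2inf P ξ hmeas hindep hlaw n _]

lemma Lset_disj (x : ℤ) : Pairwise (Function.onFun Disjoint (Lset ξ x)) := by
  have key : ∀ n n', n < n' → ∀ ω, ω ∈ Lset ξ x n → ω ∈ Lset ξ x n' → False := by
    intro n n' hlt ω h1 h2
    obtain ⟨hx1, hnr⟩ := h1
    obtain ⟨hx2, -⟩ := h2
    have hk : 1 ≤ n' - n := by omega
    have := (mem_NRfull ξ).mp hnr (n' - n) hk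
    apply this
    have hXs : Xs ξ (n + (n' - n)) ω = Xs ξ n ω + ∑ i ∈ Finset.range (n' - n), ξ (n + i) ω :=
      Xs_add ξ n (n' - n) ω
    rw [show n + (n' - n) = n' by omega] at hXs
    rw [Set.mem_setOf_eq] at hx1 hx2
    omega
  intro n n' hne
  rcases hne.lt_or_gt with h | h
  · exact Set.disjoint_left.mpr fun ω h1 h2 => key n n' h ω h1 h2
  · exact Set.disjoint_left.mpr fun ω h1 h2 => key n' n h ω h2 h1

lemma sum_Lset_le (hmeas : ∀ n, Measurable (ξ n))
    (hindep : iIndepFun ξ P)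
    (hlaw : ∀ n, ∀ i : ℤ, (P {ω | ξ n ω = i}).toReal = ν i)
    (x : ℤ) :
    (∑' n, P {ω | Xs ξ n ω = x}) * ρ P ξ ≤ 1 := by
  rw [← ENNReal.tsum_mul_right]
  have : ∀ n, P {ω | Xs ξ n ω = x} * ρ P ξ = P (Lset ξ x n) :=
    fun n => (P_Lset P ξ hmeas hindep hlaw x n).symm
  rw [tsum_congr this, ← measure_iUnion (Lset_disj ξ x)
    (fun n => ((measurable_Xs ξ hmeas n) (measurableSet_singleton x)).inter
      (measurable_NRfull ξ hmeas n))]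
  exact prob_le_one

lemma sum_Lset_zero_ge (hmeas : ∀ n, Measurable (ξ n))
    (hindep : iIndepFun ξ P)
    (hlaw : ∀ n, ∀ i : ℤ, (P {ω | ξ n ω = i}).toReal = ν i)
    (hae : ∀ᵐ ω ∂P, ∀ c : ℤ, ∀ᶠ n in atTop, c ≤ Xs ξ n ω) :
    1 ≤ (∑' n, P {ω | Xs ξ n ω = 0}) * ρ P ξ := by
  classical
  set N : Set Ω := {ω | ¬ ∀ c : ℤ, ∀ᶠ n in atTop, c ≤ Xs ξ n ω} with hNdef
  have hN : P N = 0 := ae_iff.mp hae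
  have hcover : Set.univ ⊆ (⋃ n, Lset ξ 0 n) ∪ N := by
    intro ω _
    by_cases hg : ∀ c : ℤ, ∀ᶠ n in atTop, c ≤ Xs ξ n ω
    · left
      obtain ⟨N₀, hN₀⟩ := (eventually_atTop).mp (hg 1)
      set nstar := Nat.findGreatest (fun k => Xs ξ k ω = 0) N₀ with hnstar
      refine Set.mem_iUnion.mpr ⟨nstar, ?_, ?_⟩
      · exact Nat.findGreatest_spec (P := fun k => Xs ξ k ω = 0) (Nat.zero_le _) (by show Xs ξ 0 ω = 0; simp [Xs])
      · rw [mem_NRfull]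
        intro k hk1 hsum
        have hXs : Xs ξ (nstar + k) ω = 0 := by
          rw [Xs_add ξ nstar k ω, hsum, add_zero]
          exact Nat.findGreatest_spec (P := fun k => Xs ξ k ω = 0) (Nat.zero_le _) (by show Xs ξ 0 ω = 0; simp [Xs])
        by_cases hle : nstar + k ≤ N₀
        · exact Nat.findGreatest_is_greatest (P := fun k => Xs ξ k ω = 0) (by omega) hle hXs
        · have hge := hN₀ (nstar + k) (by omega)
          rw [hXs] at hge
          norm_num at hge
    · right
      exact hg
  have h1 : (1 : ℝ≥0∞) ≤ P ((⋃ n, Lset ξ 0 n) ∪ N) := by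
    rw [← measure_univ (μ := P)]
    exact measure_mono hcover
  have h2 : P ((⋃ n, Lset ξ 0 n) ∪ N) ≤ P (⋃ n, Lset ξ 0 n) + P N := measure_union_le _ _
  rw [hN, add_zero] at h2
  have h3 : P (⋃ n, Lset ξ 0 n) = (∑' n, P {ω | Xs ξ n ω = 0}) * ρ P ξ := by
    rw [measure_iUnion (Lset_disj ξ 0)
      (fun n => ((measurable_Xs ξ hmeas n) (measurableSet_singleton 0)).inter
        (measurable_NRfull ξ hmeas n)), ← ENNReal.tsum_mul_right]
    exact tsum_congr fun n => P_Lset P ξ hmeas hindep hlaw 0 n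
  rw [← h3]
  exact le_trans h1 h2

lemma rho_ne_zero (hmeas : ∀ n, Measurable (ξ n))
    (hindep : iIndepFun ξ P)
    (hlaw : ∀ n, ∀ i : ℤ, (P {ω | ξ n ω = i}).toReal = ν i)
    (hae : ∀ᵐ ω ∂P, ∀ c : ℤ, ∀ᶠ n in atTop, c ≤ Xs ξ n ω) :
    ρ P ξ ≠ 0 := by
  intro h
  have := sum_Lset_zero_ge P ξ hmeas hindep hlaw hae
  rw [h, mul_zero] at this
  exact (by norm_num : ¬ ((1:ℝ≥0∞) ≤ 0)) this

lemma V_le (hmeas : ∀ n, Measurable (ξ n))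
    (hindep : iIndepFun ξ P)
    (hlaw : ∀ n, ∀ i : ℤ, (P {ω | ξ n ω = i}).toReal = ν i)
    (x : ℤ) :
    (∑' n, P {ω | Xs ξ n ω = x}) ≤ (ρ P ξ)⁻¹ :=
  ENNReal.le_inv_iff_mul_le.mpr (sum_Lset_le P ξ hmeas hindep hlaw x)


/-- the real-valued steps -/
def η (n : ℕ) (ω : Ω) : ℝ := (ξ n ω : ℝ)

lemma measurable_cast : Measurable (fun i : ℤ => (i : ℝ)) := measurable_of_countable _

lemma theta_ofReal (hlaw : ∀ n, ∀ i : ℤ, (P {ω | ξ n ω = i}).toReal = ν i) (i : ℤ) :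
    θ P ξ i = ENNReal.ofReal (ν i) := by
  rw [← hlaw 0 i]
  exact (ENNReal.ofReal_toReal (measure_ne_top _ _)).symm

lemma map_xi_eq (hmeas : ∀ n, Measurable (ξ n))
    (hlaw : ∀ n, ∀ i : ℤ, (P {ω | ξ n ω = i}).toReal = ν i) (n : ℕ) :
    Measure.map (ξ n) P = Measure.map (ξ 0) P := by
  ext s hs
  rw [Measure.map_apply (hmeas n) hs, Measure.map_apply (hmeas 0) hs,
    meas_preimage P (hmeas n) s, meas_preimage P (hmeas 0) s]
  exact tsum_congr fun i => by
    rw [theta_eq P ξ n _ hlaw, theta_eq P ξ 0 _ hlaw]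

lemma eta_ident (hmeas : ∀ n, Measurable (ξ n))
    (hlaw : ∀ n, ∀ i : ℤ, (P {ω | ξ n ω = i}).toReal = ν i) (i : ℕ) :
    IdentDistrib (η ξ i) (η ξ 0) P P := by
  refine ⟨(measurable_cast.comp (hmeas i)).aemeasurable,
    (measurable_cast.comp (hmeas 0)).aemeasurable, ?_⟩
  show Measure.map ((fun j : ℤ => (j : ℝ)) ∘ ξ i) P = Measure.map ((fun j : ℤ => (j : ℝ)) ∘ ξ 0) P
  rw [← Measure.map_map measurable_cast (hmeas i), ← Measure.map_map measurable_cast (hmeas 0),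
    map_xi_eq P ξ hmeas hlaw i]

lemma eta_indep (hindep : iIndepFun ξ P) :
    Pairwise (Function.onFun (IndepFun · · P) (η ξ)) := fun i j hij =>
  (hindep.indepFun hij).comp measurable_cast measurable_cast

lemma map_singleton (hmeas : ∀ n, Measurable (ξ n)) (i : ℤ) :
    Measure.map (ξ 0) P {i} = θ P ξ i := by
  rw [Measure.map_apply (hmeas 0) (measurableSet_singleton i)]
  rfl

lemma integrable_eta (hmeas : ∀ n, Measurable (ξ n))
    (hlaw : ∀ n, ∀ i : ℤ, (P {ω | ξ n ω = i}).toReal = ν i)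
    (hν0 : ∀ i, 0 ≤ ν i)
    (hfinite_mean : Summable fun i : ℤ => |(i : ℝ)| * ν i) :
    Integrable (η ξ 0) P := by
  constructor
  · exact (measurable_cast.comp (hmeas 0)).aestronglyMeasurable
  · show (∫⁻ ω, ‖η ξ 0 ω‖₊ ∂P) < ∞
    have h1 : (∫⁻ ω, ‖η ξ 0 ω‖₊ ∂P)
        = ∫⁻ i, (‖(i : ℝ)‖₊ : ℝ≥0∞) ∂(Measure.map (ξ 0) P) := by
      rw [lintegral_map (measurable_of_countable _) (hmeas 0)]
      rfl
    rw [h1, lintegral_countable' (fun i : ℤ => (‖(i : ℝ)‖₊ : ℝ≥0∞))]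
    have h2 : ∀ i : ℤ, (‖(i : ℝ)‖₊ : ℝ≥0∞) * Measure.map (ξ 0) P {i}
        = ENNReal.ofReal (|(i : ℝ)| * ν i) := by
      intro i
      rw [map_singleton P ξ hmeas, theta_ofReal P ξ hlaw,
        ← enorm_eq_nnnorm, ← ofReal_norm, Real.norm_eq_abs,
        ← ENNReal.ofReal_mul (abs_nonneg _)]
    rw [tsum_congr h2, ← ENNReal.ofReal_tsum_of_nonneg
      (fun i => mul_nonneg (abs_nonneg _) (hν0 i)) hfinite_mean]
    exact ENNReal.ofReal_lt_top

lemma integral_eta (hmeas : ∀ n, Measurable (ξ n))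
    (hlaw : ∀ n, ∀ i : ℤ, (P {ω | ξ n ω = i}).toReal = ν i)
    (hν0 : ∀ i, 0 ≤ ν i)
    (hfinite_mean : Summable fun i : ℤ => |(i : ℝ)| * ν i) :
    (∫ ω, η ξ 0 ω ∂P) = ∑' i : ℤ, (i : ℝ) * ν i := by
  have hint := integrable_eta P ξ hmeas hlaw hν0 hfinite_mean
  have hintm : Integrable (fun i : ℤ => (i : ℝ)) (Measure.map (ξ 0) P) :=
    (integrable_map_measure measurable_cast.aestronglyMeasurable
      (hmeas 0).aemeasurable).mpr hint
  have h1 : (∫ ω, η ξ 0 ω ∂P) = ∫ i : ℤ, (i : ℝ) ∂(Measure.map (ξ 0) P) :=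
    (integral_map (hmeas 0).aemeasurable measurable_cast.aestronglyMeasurable).symm
  rw [h1, integral_countable' hintm]
  refine tsum_congr fun i => ?_
  rw [measureReal_def, map_singleton P ξ hmeas, ← hlaw 0 i]
  show (P {ω | ξ 0 ω = i}).toReal • (i : ℝ) = (i : ℝ) * (P {ω | ξ 0 ω = i}).toReal
  rw [smul_eq_mul, mul_comm]

lemma ae_tendsto (hmeas : ∀ n, Measurable (ξ n))
    (hindep : iIndepFun ξ P)
    (hlaw : ∀ n, ∀ i : ℤ, (P {ω | ξ n ω = i}).toReal = ν i)
    (hν0 : ∀ i, 0 ≤ ν i)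
    (hfinite_mean : Summable fun i : ℤ => |(i : ℝ)| * ν i)
    (hpos_mean : 0 < ∑' i : ℤ, (i : ℝ) * ν i) :
    ∀ᵐ ω ∂P, ∀ c : ℤ, ∀ᶠ n in atTop, c ≤ Xs ξ n ω := by
  have hint := integrable_eta P ξ hmeas hlaw hν0 hfinite_mean
  have hslln := strong_law_ae_real (μ := P) (η ξ) hint (eta_indep P ξ hindep)
    (eta_ident P ξ hmeas hlaw)
  have hLpos : 0 < P[η ξ 0] := by
    show (0 : ℝ) < ∫ ω, η ξ 0 ω ∂P
    rw [integral_eta P ξ hmeas hlaw hν0 hfinite_mean]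
    exact hpos_mean
  filter_upwards [hslln] with ω hω
  intro c
  have hsum : ∀ n : ℕ, (∑ i ∈ Finset.range n, η ξ i ω) = ((Xs ξ n ω : ℤ) : ℝ) := by
    intro n
    rw [Xs, Int.cast_sum]
    rfl
  have h2 : Tendsto (fun n : ℕ => ((Xs ξ n ω : ℤ) : ℝ)) atTop atTop := by
    have h3 : Tendsto (fun n : ℕ => (∑ i ∈ Finset.range n, η ξ i ω) / n * n) atTop atTop :=
      Tendsto.pos_mul_atTop hLpos hω tendsto_natCast_atTop_atTop
    refine Tendsto.congr' ?_ h3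
    filter_upwards [eventually_ge_atTop 1] with n hn
    rw [div_mul_cancel₀ _ (by exact_mod_cast (by omega : n ≠ 0) : (n : ℝ) ≠ 0), hsum]
  filter_upwards [tendsto_atTop.mp h2 (c : ℝ)] with n hn
  exact_mod_cast hn


/-- tail of the step distribution -/
def τ (c : ℕ) : ℝ≥0∞ := P {ω | (c : ℤ) < ξ 0 ω}

lemma tau_eq (hmeas : ∀ n, Measurable (ξ n))
    (hlaw : ∀ n, ∀ i : ℤ, (P {ω | ξ n ω = i}).toReal = ν i) (c : ℕ) :
    τ P ξ c = ∑' i : ℤ, (if (c : ℤ) < i then θ P ξ i else 0) := by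
  have h1 : {ω | (c : ℤ) < ξ 0 ω} = ξ 0 ⁻¹' {i : ℤ | (c : ℤ) < i} := rfl
  rw [τ, h1, meas_preimage P (hmeas 0)]
  have h2 : ∀ b : ↥{i : ℤ | (c : ℤ) < i}, P (ξ 0 ⁻¹' {(b : ℤ)}) = θ P ξ (b : ℤ) :=
    fun b => theta_eq P ξ 0 _ hlaw
  rw [tsum_congr h2, _root_.tsum_subtype {i : ℤ | (c : ℤ) < i} (θ P ξ)]
  exact tsum_congr fun i => by rw [Set.indicator_apply]; rfl

lemma tau_sum_ne_top (hmeas : ∀ n, Measurable (ξ n))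
    (hlaw : ∀ n, ∀ i : ℤ, (P {ω | ξ n ω = i}).toReal = ν i)
    (hν0 : ∀ i, 0 ≤ ν i)
    (hfinite_mean : Summable fun i : ℤ => |(i : ℝ)| * ν i) :
    (∑' c : ℕ, τ P ξ c) ≠ ∞ := by
  classical
  rw [tsum_congr (tau_eq P ξ hmeas hlaw), ENNReal.tsum_comm]
  have hinner : ∀ i : ℤ, (∑' c : ℕ, (if (c : ℤ) < i then θ P ξ i else 0))
      = (i.toNat : ℝ≥0∞) * θ P ξ i := by
    intro i
    rw [tsum_eq_sum (s := Finset.range i.toNat)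
      (fun c hc => if_neg (by simp only [Finset.mem_range] at hc; omega))]
    rw [Finset.sum_congr rfl (fun c hc => if_pos
      (by simp only [Finset.mem_range] at hc; omega))]
    rw [Finset.sum_const, Finset.card_range, nsmul_eq_mul]
  rw [tsum_congr hinner]
  have hterm : ∀ i : ℤ, (i.toNat : ℝ≥0∞) * θ P ξ i
      = ENNReal.ofReal ((i.toNat : ℝ) * ν i) := by
    intro i
    rw [theta_ofReal P ξ hlaw, ← ENNReal.ofReal_natCast i.toNat,
      ← ENNReal.ofReal_mul (Nat.cast_nonneg _)]
  have hsummable : Summable (fun i : ℤ => (i.toNat : ℝ) * ν i) := by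
    refine Summable.of_nonneg_of_le (fun i => mul_nonneg (Nat.cast_nonneg _) (hν0 i))
      (fun i => mul_le_mul_of_nonneg_right ?_ (hν0 i)) hfinite_mean
    rcases le_or_gt i 0 with h | h
    · have : i.toNat = 0 := by omega
      rw [this]
      simpa using abs_nonneg (i : ℝ)
    · have : (i.toNat : ℤ) = i := by omega
      have : (i.toNat : ℝ) = (i : ℝ) := by exact_mod_cast this
      rw [this]
      exact le_abs_self _
  rw [tsum_congr hterm, ← ENNReal.ofReal_tsum_of_nonneg
    (fun i => mul_nonneg (Nat.cast_nonneg _) (hν0 i)) hsummable]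
  exact ENNReal.ofReal_ne_top

lemma tail_tendsto (hmeas : ∀ n, Measurable (ξ n))
    (hlaw : ∀ n, ∀ i : ℤ, (P {ω | ξ n ω = i}).toReal = ν i)
    (hν0 : ∀ i, 0 ≤ ν i)
    (hfinite_mean : Summable fun i : ℤ => |(i : ℝ)| * ν i) :
    Tendsto (fun C : ℕ => ∑' j : ℕ, τ P ξ (C + j)) atTop (𝓝 0) := by
  have h := ENNReal.tendsto_sum_nat_add (τ P ξ)
    (tau_sum_ne_top P ξ hmeas hlaw hν0 hfinite_mean)
  refine h.congr fun C => tsum_congr fun j => by rw [add_comm]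


lemma FS_blk_zero' {k n : ℕ} (hk : k ≤ n) (ω : Ω) : FS (blk ξ 0 n ω) k = Xs ξ k ω := by
  rw [FS_blk ξ hk ω]
  exact Finset.sum_congr rfl fun i _ => by rw [zero_add]

lemma xi_eq_diff (m : ℕ) (ω : Ω) : ξ m ω = Xs ξ (m + 1) ω - Xs ξ m ω := by
  have := Xs_add ξ m 1 ω
  rw [Finset.sum_range_one, add_zero] at this
  omega

lemma main_bound (hmeas : ∀ n, Measurable (ξ n))
    (hindep : iIndepFun ξ P)
    (hlaw : ∀ n, ∀ i : ℤ, (P {ω | ξ n ω = i}).toReal = ν i)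
    (hae : ∀ᵐ ω ∂P, ∀ c : ℤ, ∀ᶠ n in atTop, c ≤ Xs ξ n ω)
    (p C : ℕ) (hp : 1 ≤ p) :
    P {ω | ∀ n : ℕ, (∑ k ∈ Finset.range n, ξ k ω) ∉ Set.Icc (p : ℤ) ((p : ℤ) + C)}
      ≤ (ρ P ξ)⁻¹ * ∑' j : ℕ, τ P ξ (C + 1 + j) := by
  classical
  set Aset : (m : ℕ) → ℕ → Set (Fin m → ℤ) := fun m j =>
    {a : Fin m → ℤ | (∀ k ≤ m, FS a k < (p : ℤ)) ∧ FS a m = (p : ℤ) - (j + 1)} with hAset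
  set Jset : ℕ → Set (Fin 1 → ℤ) := fun j => {b | ((C : ℤ) + (j + 1)) < b 0} with hJset
  set D : ℕ → ℕ → Set Ω := fun m j => blk ξ 0 m ⁻¹' Aset m j ∩ blk ξ m 1 ⁻¹' Jset j with hD
  set Bp : Set Ω := {ω | ∀ n, Xs ξ n ω < (p : ℤ)} with hBp
  have hsub : {ω | ∀ n : ℕ, (∑ k ∈ Finset.range n, ξ k ω) ∉ Set.Icc (p : ℤ) ((p : ℤ) + C)}
      ⊆ Bp ∪ ⋃ m, ⋃ j, D m j := by
    intro ω hω
    simp only [Set.mem_setOf_eq] at hω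
    by_cases hB : ∀ n, Xs ξ n ω < (p : ℤ)
    · exact Or.inl hB
    · right
      push_neg at hB
      have hex : ∃ n, (p : ℤ) ≤ Xs ξ n ω := hB
      set n₀ := Nat.find hex with hn₀
      have h₀ : (p : ℤ) ≤ Xs ξ n₀ ω := Nat.find_spec hex
      have hmin : ∀ k < n₀, Xs ξ k ω < (p : ℤ) := fun k hk => not_le.mp (Nat.find_min hex hk)
      have hne : n₀ ≠ 0 := by
        intro h
        rw [h] at h₀
        have : Xs ξ 0 ω = 0 := by simp [Xs]
        omega
      set m := n₀ - 1 with hm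
      have hmn : n₀ = m + 1 := by omega
      have hXm : Xs ξ m ω < (p : ℤ) := hmin m (by omega)
      set j := ((p : ℤ) - 1 - Xs ξ m ω).toNat with hj
      have hjeq : (j : ℤ) = (p : ℤ) - 1 - Xs ξ m ω := by omega
      have hout : Xs ξ n₀ ω ∉ Set.Icc (p : ℤ) ((p : ℤ) + C) := hω n₀
      have hbig : (p : ℤ) + C < Xs ξ n₀ ω := by
        rw [Set.mem_Icc, not_and_or] at hout
        rcases hout with h | h
        · omega
        · omega
      refine Set.mem_iUnion.mpr ⟨m, Set.mem_iUnion.mpr ⟨j, ?_, ?_⟩⟩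
      · show blk ξ 0 m ω ∈ Aset m j
        refine ⟨fun k hk => ?_, ?_⟩
        · rw [FS_blk_zero' ξ hk ω]
          exact hmin k (by omega)
        · rw [FS_blk_zero' ξ le_rfl ω]
          omega
      · show blk ξ m 1 ω ∈ Jset j
        show ((C : ℤ) + (j + 1)) < blk ξ m 1 ω 0
        have hb : blk ξ m 1 ω 0 = ξ m ω := by
          show ξ (m + ((0 : Fin 1) : ℕ)) ω = ξ m ω
          norm_num
        rw [hb, xi_eq_diff ξ m ω, ← hmn]
        omega
  have hBp0 : P Bp = 0 := by
    refine measure_mono_null ?_ (ae_iff.mp hae)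
    intro ω hω
    simp only [Set.mem_setOf_eq]
    intro hg
    obtain ⟨N₀, hN₀⟩ := (eventually_atTop).mp (hg (p : ℤ))
    exact absurd (hω N₀) (not_lt.mpr (hN₀ N₀ le_rfl))
  have hDle : ∀ m j, P (D m j) ≤ P {ω | Xs ξ m ω = (p : ℤ) - (j + 1)} * τ P ξ (C + 1 + j) := by
    intro m j
    rw [hD]
    have := L2 P ξ hmeas hindep hlaw m 1 (Aset m j) (Jset j)
    rw [this]
    gcongr
    · intro ω hω
      have : FS (blk ξ 0 m ω) m = (p : ℤ) - (j + 1) := hω.2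
      rw [FS_blk_zero' ξ le_rfl ω] at this
      exact this
    · have he : blk ξ 0 1 ⁻¹' Jset j = {ω | ((C + 1 + j : ℕ) : ℤ) < ξ 0 ω} := by
        ext ω
        simp only [Set.mem_preimage, Set.mem_setOf_eq, hJset]
        have hb : blk ξ 0 1 ω 0 = ξ 0 ω := rfl
        rw [hb]
        push_cast
        constructor <;> intro h <;> omega
      rw [he]
      exact le_rfl
  calc P {ω | ∀ n : ℕ, (∑ k ∈ Finset.range n, ξ k ω) ∉ Set.Icc (p : ℤ) ((p : ℤ) + C)}
      ≤ P (Bp ∪ ⋃ m, ⋃ j, D m j) := measure_mono hsub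
    _ ≤ P Bp + P (⋃ m, ⋃ j, D m j) := measure_union_le _ _
    _ = P (⋃ m, ⋃ j, D m j) := by rw [hBp0, zero_add]
    _ ≤ ∑' m, P (⋃ j, D m j) := measure_iUnion_le _
    _ ≤ ∑' m, ∑' j, P (D m j) := ENNReal.tsum_le_tsum fun m => measure_iUnion_le _
    _ ≤ ∑' (m : ℕ) (j : ℕ), P {ω | Xs ξ m ω = (p : ℤ) - (j + 1)} * τ P ξ (C + 1 + j) :=
        ENNReal.tsum_le_tsum fun m => ENNReal.tsum_le_tsum fun j => hDle m j
    _ = ∑' (j : ℕ) (m : ℕ), P {ω | Xs ξ m ω = (p : ℤ) - (j + 1)} * τ P ξ (C + 1 + j) :=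
        ENNReal.tsum_comm
    _ = ∑' (j : ℕ), (∑' (m : ℕ), P {ω | Xs ξ m ω = (p : ℤ) - (j + 1)}) * τ P ξ (C + 1 + j) :=
        tsum_congr fun j => ENNReal.tsum_mul_right
    _ ≤ ∑' (j : ℕ), (ρ P ξ)⁻¹ * τ P ξ (C + 1 + j) := by
        refine ENNReal.tsum_le_tsum fun j => ?_
        exact mul_le_mul_left (V_le P ξ hmeas hindep hlaw _) _
    _ = (ρ P ξ)⁻¹ * ∑' (j : ℕ), τ P ξ (C + 1 + j) := ENNReal.tsum_mul_left

end RW6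


/-- Let `ν` be a probability measure on `ℤ` with finite mean and strictly positive mean,
and let `X_n = ξ_0 + ⋯ + ξ_{n-1}` be the random walk with i.i.d. steps of law `ν` started
at `0`. Then for every `ε > 0` there exist `C` and `p₀` such that for all `p ≥ p₀` the
probability that `X` never hits the interval `[p, p+C]` is at most `ε`. -/
theorem statement6 {Ω : Type*} [MeasurableSpace Ω] (P : Measure Ω) [IsProbabilityMeasure P]
    (ν : ℤ → ℝ) (ξ : ℕ → Ω → ℤ)
    (hmeas : ∀ n, Measurable (ξ n))
    (hindep : iIndepFun ξ P)
    (hlaw : ∀ n, ∀ i : ℤ, (P {ω | ξ n ω = i}).toReal = ν i)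
    (hν0 : ∀ i, 0 ≤ ν i) (hν1 : HasSum ν 1)
    (hfinite_mean : Summable fun i : ℤ => |(i : ℝ)| * ν i)
    (hpos_mean : 0 < ∑' i : ℤ, (i : ℝ) * ν i) :
    ∀ ε > (0 : ℝ), ∃ C : ℕ, ∃ p0 : ℕ, ∀ p : ℕ, p0 ≤ p →
      P {ω | ∀ n : ℕ, (∑ k ∈ Finset.range n, ξ k ω) ∉ Set.Icc (p : ℤ) ((p : ℤ) + C)}
        ≤ ENNReal.ofReal ε := by
  intro ε hε
  have hae := RW6.ae_tendsto P ξ hmeas hindep hlaw hν0 hfinite_mean hpos_mean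
  have hρ := RW6.rho_ne_zero P ξ hmeas hindep hlaw hae
  have htail := RW6.tail_tendsto P ξ hmeas hlaw hν0 hfinite_mean
  have hmul : Filter.Tendsto (fun C : ℕ => (RW6.ρ P ξ)⁻¹ * ∑' j : ℕ, RW6.τ P ξ (C + j))
      Filter.atTop (nhds 0) := by
    have h := ENNReal.Tendsto.const_mul htail (Or.inr (ENNReal.inv_ne_top.mpr hρ))
    simpa using h
  have hev := hmul.eventually_le_const (ENNReal.ofReal_pos.mpr hε)
  obtain ⟨C₀, hC₀⟩ := Filter.eventually_atTop.mp hev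
  refine ⟨C₀, 1, fun p hp => ?_⟩
  calc P {ω | ∀ n : ℕ, (∑ k ∈ Finset.range n, ξ k ω) ∉ Set.Icc (p : ℤ) ((p : ℤ) + C₀)}
      ≤ (RW6.ρ P ξ)⁻¹ * ∑' j : ℕ, RW6.τ P ξ (C₀ + 1 + j) :=
        RW6.main_bound P ξ hmeas hindep hlaw hae p C₀ hp
    _ ≤ ENNReal.ofReal ε := hC₀ (C₀ + 1) (by omega)
end

section
/- Let (X^{(ω)})_{ω ∈ Ω} be a family of nonnegative real random variables that is uniformly integrable, and for each ω let (X_t^{(ω)})_{t≥1} be i.i.d. copies of X^{(ω)}. Then the sample averages (1/t) Σ_{i=1}^t X_i^{(ω)} converge in probability to E[X^{(ω)}] uniformly in ω: for all ε > 0 there is t_0 such that for all t ≥ t_0 and all ω ∈ Ω, P(|(1/t) Σ_{i=1}^t X_i^{(ω)} − E[X^{(ω)}]| > ε) < ε. -/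
open MeasureTheory ProbabilityTheory

private lemma integral_comp_eq_of_map_eq {Ω : Type*} [MeasurableSpace Ω] {P : Measure Ω}
    {X Y : Ω → ℝ} (hX : Measurable X) (hY : Measurable Y)
    (h : Measure.map X P = Measure.map Y P) {g : ℝ → ℝ} (hg : Measurable g) :
    ∫ ω, g (X ω) ∂P = ∫ ω, g (Y ω) ∂P := by
  rw [← integral_map hX.aemeasurable hg.aestronglyMeasurable, h,
    integral_map hY.aemeasurable hg.aestronglyMeasurable]

private lemma integrable_comp_iff_of_map_eq {Ω : Type*} [MeasurableSpace Ω] {P : Measure Ω}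
    {X Y : Ω → ℝ} (hX : Measurable X) (hY : Measurable Y)
    (h : Measure.map X P = Measure.map Y P) {g : ℝ → ℝ} (hg : Measurable g) :
    Integrable (g ∘ X) P ↔ Integrable (g ∘ Y) P := by
  rw [← integrable_map_measure hg.aestronglyMeasurable hX.aemeasurable, h,
    integrable_map_measure hg.aestronglyMeasurable hY.aemeasurable]

/-- Uniform weak law of large numbers: if `(X^{(ω)})_{ω ∈ ι}` is a uniformly integrable
family of nonnegative real random variables and, for each `ω`, `(X_t^{(ω)})_{t}` are
i.i.d. copies of `X^{(ω)}`, then the sample averages converge in probability to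
`E[X^{(ω)}]` uniformly in `ω`: for all `ε > 0` there is `t₀` such that for all `t ≥ t₀`
and all `ω`, `P(|t⁻¹ ∑_{i<t} X_i^{(ω)} − E[X^{(ω)}]| > ε) < ε`. -/
theorem statement7 {Ω : Type*} [MeasurableSpace Ω] (P : Measure Ω) [IsProbabilityMeasure P]
    {ι : Type*} (X : ι → ℕ → Ω → ℝ)
    (hmeas : ∀ i t, Measurable (X i t))
    (hnonneg : ∀ i t ω, 0 ≤ X i t ω)
    (hindep : ∀ i, iIndepFun (X i) P)
    (hident : ∀ i t, Measure.map (X i t) P = Measure.map (X i 0) P)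
    (hint : ∀ i, Integrable (X i 0) P)
    (hUI : ∀ δ > (0 : ℝ), ∃ A : ℝ, ∀ i, ∫ ω in {ω | A < X i 0 ω}, X i 0 ω ∂P ≤ δ) :
    ∀ ε > (0 : ℝ), ∃ t0 : ℕ, ∀ t : ℕ, t0 ≤ t → ∀ i : ι,
      P {ω | ε < |(t : ℝ)⁻¹ * ∑ k ∈ Finset.range t, X i k ω - ∫ ω', X i 0 ω' ∂P|}
        < ENNReal.ofReal ε := by
  intro ε hε
  set δ : ℝ := min (ε / 3) (ε ^ 2 / 6) with hδdef
  have hδpos : 0 < δ := lt_min (by positivity) (by positivity)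
  have hδ3 : δ ≤ ε / 3 := min_le_left _ _
  have hδ6 : δ ≤ ε ^ 2 / 6 := min_le_right _ _
  obtain ⟨A, hA⟩ := hUI δ hδpos
  set B : ℝ := max A 1 with hBdef
  have hB1 : (1 : ℝ) ≤ B := le_max_right _ _
  have hBpos : (0 : ℝ) < B := lt_of_lt_of_le one_pos hB1
  obtain ⟨t0, ht0⟩ := exists_nat_gt (18 * B ^ 2 / ε ^ 3)
  refine ⟨t0 + 1, fun t ht i => ?_⟩
  have htpos : 0 < t := lt_of_lt_of_le (Nat.succ_pos t0) ht
  have htR : (0 : ℝ) < t := Nat.cast_pos.mpr htpos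
  have htgt : 18 * B ^ 2 / ε ^ 3 < (t : ℝ) := by
    calc 18 * B ^ 2 / ε ^ 3 < (t0 : ℝ) := ht0
    _ ≤ (t : ℝ) := by exact_mod_cast le_trans (Nat.le_succ t0) ht
  -- truncated variables
  set g : ℝ → ℝ := fun x => min x B with hgdef
  have hgmeas : Measurable g := measurable_id.min measurable_const
  set Y : ℕ → Ω → ℝ := fun k ω => g (X i k ω) with hYdef
  have hYmeas : ∀ k, Measurable (Y k) := fun k => hgmeas.comp (hmeas i k)
  have hYnonneg : ∀ k ω, 0 ≤ Y k ω := fun k ω => le_min (hnonneg i k ω) hBpos.le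
  have hYle : ∀ k ω, Y k ω ≤ B := fun k ω => min_le_right _ _
  have hYleX : ∀ k ω, Y k ω ≤ X i k ω := fun k ω => min_le_left _ _
  have hYmem : ∀ k, MemLp (Y k) 2 P := by
    intro k
    refine MemLp.mono_exponent ?_ (le_top : (2 : ENNReal) ≤ ⊤)
    exact memLp_top_of_bound (hYmeas k).aestronglyMeasurable B
      (Filter.Eventually.of_forall fun ω => by
        rw [Real.norm_eq_abs, abs_of_nonneg (hYnonneg k ω)]; exact hYle k ω)
  have hYint : ∀ k, Integrable (Y k) P := fun k => (hYmem k).integrable one_le_two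
  have hXkint : ∀ k, Integrable (X i k) P := by
    intro k
    have := (integrable_comp_iff_of_map_eq (hmeas i k) (hmeas i 0) (hident i k)
      measurable_id).mpr
    simpa [Function.comp] using this (by simpa [Function.comp] using hint i)
  -- identical distribution consequences
  have hXint_eq : ∀ k, ∫ ω, X i k ω ∂P = ∫ ω, X i 0 ω ∂P := fun k => by
    simpa using integral_comp_eq_of_map_eq (hmeas i k) (hmeas i 0) (hident i k)
      (measurable_id : Measurable (id : ℝ → ℝ))
  have hYint_eq : ∀ k, ∫ ω, Y k ω ∂P = ∫ ω, Y 0 ω ∂P := fun k =>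
    integral_comp_eq_of_map_eq (hmeas i k) (hmeas i 0) (hident i k) hgmeas
  have hY2_eq : ∀ k, ∫ ω, (Y k ω) ^ 2 ∂P = ∫ ω, (Y 0 ω) ^ 2 ∂P := fun k =>
    integral_comp_eq_of_map_eq (hmeas i k) (hmeas i 0) (hident i k) (hgmeas.pow_const 2)
  have hVar_eq : ∀ k, variance (Y k) P = variance (Y 0) P := by
    intro k
    rw [variance_eq_sub (hYmem k), variance_eq_sub (hYmem 0)]
    simp only [Pi.pow_apply]
    rw [hY2_eq k, hYint_eq k]
  -- truncation error
  set m : ℝ := ∫ ω', X i 0 ω' ∂P with hmdef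
  set μY : ℝ := ∫ ω, Y 0 ω ∂P with hμYdef
  have hgap_nonneg : 0 ≤ m - μY := by
    rw [hmdef, hμYdef, ← integral_sub (hint i) (hYint 0)]
    exact integral_nonneg fun ω => sub_nonneg.mpr (hYleX 0 ω)
  have hgap : m - μY ≤ δ := by
    rw [hmdef, hμYdef, ← integral_sub (hint i) (hYint 0)]
    have hBset : MeasurableSet {ω | B < X i 0 ω} :=
      measurableSet_lt measurable_const (hmeas i 0)
    calc ∫ ω, (X i 0 ω - Y 0 ω) ∂P
        ≤ ∫ ω, Set.indicator {ω | B < X i 0 ω} (X i 0) ω ∂P := by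
          refine integral_mono ((hint i).sub (hYint 0)) ((hint i).indicator hBset) fun ω => ?_
          simp only [hYdef, hgdef, Set.indicator_apply, Set.mem_setOf_eq]
          split_ifs with hω
          · rw [min_eq_right hω.le]
            linarith [hBpos]
          · rw [min_eq_left (not_lt.mp hω)]
            simp
      _ = ∫ ω in {ω | B < X i 0 ω}, X i 0 ω ∂P := integral_indicator hBset
      _ ≤ ∫ ω in {ω | A < X i 0 ω}, X i 0 ω ∂P := by
          refine setIntegral_mono_set (hint i).integrableOn
            (Filter.Eventually.of_forall fun ω => hnonneg i 0 ω)
            (Filter.Eventually.of_forall fun ω hω => ?_)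
          exact lt_of_le_of_lt (le_max_left A 1) hω
      _ ≤ δ := hA i
  -- sample averages
  set SY : Ω → ℝ := fun ω => (t : ℝ)⁻¹ * ∑ k ∈ Finset.range t, Y k ω with hSYdef
  set S : Ω → ℝ := fun ω => (t : ℝ)⁻¹ * ∑ k ∈ Finset.range t, X i k ω with hSdef
  set D : Ω → ℝ := fun ω => S ω - SY ω with hDdef
  have hSint : Integrable S P :=
    (integrable_finset_sum _ fun k _ => hXkint k).const_mul _
  have hSYint : Integrable SY P :=
    (integrable_finset_sum _ fun k _ => hYint k).const_mul _
  have hDint : Integrable D P := hSint.sub hSYint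
  have hDnonneg : ∀ ω, 0 ≤ D ω := by
    intro ω
    have : SY ω ≤ S ω := by
      apply mul_le_mul_of_nonneg_left _ (inv_nonneg.mpr htR.le)
      exact Finset.sum_le_sum fun k _ => hYleX k ω
    simpa [hDdef] using sub_nonneg.mpr this
  have hES : ∫ ω, S ω ∂P = m := by
    rw [hSdef]
    simp only
    rw [integral_const_mul, integral_finset_sum _ fun k _ => hXkint k,
      Finset.sum_congr rfl fun k _ => hXint_eq k]
    simp only [Finset.sum_const, Finset.card_range, nsmul_eq_mul]
    rw [← mul_assoc, inv_mul_cancel₀ (ne_of_gt htR), one_mul]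
  have hESY : ∫ ω, SY ω ∂P = μY := by
    rw [hSYdef]
    simp only
    rw [integral_const_mul, integral_finset_sum _ fun k _ => hYint k,
      Finset.sum_congr rfl fun k _ => hYint_eq k]
    simp only [Finset.sum_const, Finset.card_range, nsmul_eq_mul]
    rw [← mul_assoc, inv_mul_cancel₀ (ne_of_gt htR), one_mul]
  have hED : ∫ ω, D ω ∂P ≤ δ := by
    rw [hDdef]
    simp only
    rw [integral_sub hSint hSYint, hES, hESY]
    exact hgap
  -- Markov's inequality for the truncation part
  have hE1 : P {ω | ε / 3 ≤ D ω} ≤ ENNReal.ofReal (3 * δ / ε) := by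
    have hmark := mul_meas_ge_le_integral_of_nonneg
      (Filter.Eventually.of_forall hDnonneg) hDint (ε / 3)
    rw [← ENNReal.ofReal_toReal (measure_ne_top P _)]
    apply ENNReal.ofReal_le_ofReal
    rw [le_div_iff₀ hε]
    have : ε / 3 * (P {ω | ε / 3 ≤ D ω}).toReal ≤ δ := le_trans hmark hED
    nlinarith [ENNReal.toReal_nonneg (a := P {ω | ε / 3 ≤ D ω})]
  -- Chebyshev's inequality for the truncated part
  have hSYmem : MemLp SY 2 P := by
    have h1 : MemLp (∑ k ∈ Finset.range t, Y k) 2 P :=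
      memLp_finsetSum' _ fun k _ => hYmem k
    have h2 := h1.const_mul ((t : ℝ)⁻¹)
    have : SY = fun ω => (t : ℝ)⁻¹ * (∑ k ∈ Finset.range t, Y k) ω := by
      funext ω; simp [hSYdef, Finset.sum_apply]
    rw [this]; exact h2
  have hYindep : iIndepFun Y P :=
    (hindep i).comp (fun _ => g) (fun _ => hgmeas)
  have hVarSY : variance SY P ≤ B ^ 2 / t := by
    have h1 : SY = fun ω => (t : ℝ)⁻¹ * (∑ k ∈ Finset.range t, Y k) ω := by
      funext ω; simp [hSYdef, Finset.sum_apply]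
    have h2 : variance SY P = ((t : ℝ)⁻¹) ^ 2 * variance (∑ k ∈ Finset.range t, Y k) P := by
      rw [h1, variance_const_mul]
    have h3 : variance (∑ k ∈ Finset.range t, Y k) P
        = ∑ k ∈ Finset.range t, variance (Y k) P :=
      IndepFun.variance_sum (fun k _ => hYmem k)
        (fun k _ l _ hkl => hYindep.indepFun hkl)
    have h4 : variance (Y 0) P ≤ B ^ 2 := by
      refine le_trans (variance_le_expectation_sq (hYmeas 0).aestronglyMeasurable) ?_
      have : ∫ ω, ((Y 0) ^ 2) ω ∂P ≤ ∫ _ω, B ^ 2 ∂P := by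
        refine integral_mono ?_ (integrable_const _) fun ω => ?_
        · exact (hYmem 0).integrable_sq
        · simp only [Pi.pow_apply]
          exact pow_le_pow_left₀ (hYnonneg 0 ω) (hYle 0 ω) 2
      simpa using this
    rw [h2, h3, Finset.sum_congr rfl fun k _ => hVar_eq k]
    simp only [Finset.sum_const, Finset.card_range, nsmul_eq_mul]
    rw [div_eq_mul_inv, mul_comm (B ^ 2)]
    calc ((t : ℝ)⁻¹) ^ 2 * ((t : ℝ) * variance (Y 0) P)
        = (t : ℝ)⁻¹ * variance (Y 0) P := by
          field_simp
      _ ≤ (t : ℝ)⁻¹ * B ^ 2 := by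
          exact mul_le_mul_of_nonneg_left h4 (inv_nonneg.mpr htR.le)
  have hE2 : P {ω | ε / 3 ≤ |SY ω - μY|} ≤ ENNReal.ofReal (9 * B ^ 2 / (t * ε ^ 2)) := by
    have hcheb := meas_ge_le_variance_div_sq (μ := P) hSYmem
      (c := ε / 3) (by positivity)
    have hPint : (∫ ω, SY ω ∂P) = μY := hESY
    rw [show (∫ ω, SY ω ∂P) = μY from hESY] at hcheb
    refine le_trans hcheb (ENNReal.ofReal_le_ofReal ?_)
    have hd : variance SY P / (ε / 3) ^ 2 ≤ (B ^ 2 / t) / (ε / 3) ^ 2 := by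
      gcongr
    refine le_trans hd (le_of_eq ?_)
    field_simp
    ring
  -- event inclusion
  have hincl : {ω | ε < |S ω - m|}
      ⊆ {ω | ε / 3 ≤ D ω} ∪ {ω | ε / 3 ≤ |SY ω - μY|} := by
    intro ω hω
    by_contra hcon
    simp only [Set.mem_union, Set.mem_setOf_eq, not_or, not_le] at hcon
    obtain ⟨h1, h2⟩ := hcon
    have habs : |S ω - m| ≤ D ω + |SY ω - μY| + (m - μY) := by
      have heq : S ω - m = D ω + ((SY ω - μY) + (μY - m)) := by
        simp only [hDdef]; ring
      calc |S ω - m| = |D ω + ((SY ω - μY) + (μY - m))| := by rw [heq]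
        _ ≤ |D ω| + |(SY ω - μY) + (μY - m)| := abs_add_le _ _
        _ ≤ |D ω| + (|SY ω - μY| + |μY - m|) := by
            exact add_le_add_right (abs_add_le _ _) _
        _ = D ω + |SY ω - μY| + (m - μY) := by
            rw [abs_of_nonneg (hDnonneg ω),
              abs_of_nonpos (show μY - m ≤ 0 by linarith), neg_sub]
            ring
    simp only [Set.mem_setOf_eq] at hω
    have h3 : m - μY ≤ ε / 3 := le_trans hgap hδ3
    have h4 : D ω + |SY ω - μY| + (m - μY) < ε / 3 + ε / 3 + ε / 3 :=
      add_lt_add_of_lt_of_le (add_lt_add h1 h2) h3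
    have h5 : |S ω - m| < ε :=
      lt_of_le_of_lt habs (lt_of_lt_of_le h4 (le_of_eq (by ring)))
    exact absurd hω (not_lt.mpr h5.le)
  -- put everything together
  calc P {ω | ε < |S ω - m|}
      ≤ P ({ω | ε / 3 ≤ D ω} ∪ {ω | ε / 3 ≤ |SY ω - μY|}) := measure_mono hincl
    _ ≤ P {ω | ε / 3 ≤ D ω} + P {ω | ε / 3 ≤ |SY ω - μY|} := measure_union_le _ _
    _ ≤ ENNReal.ofReal (3 * δ / ε) + ENNReal.ofReal (9 * B ^ 2 / (t * ε ^ 2)) :=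
        add_le_add hE1 hE2
    _ = ENNReal.ofReal (3 * δ / ε + 9 * B ^ 2 / (t * ε ^ 2)) := by
        rw [← ENNReal.ofReal_add (by positivity) (by positivity)]
    _ < ENNReal.ofReal ε := by
        rw [ENNReal.ofReal_lt_ofReal_iff hε]
        have hb1 : 3 * δ / ε ≤ ε / 2 := by
          rw [div_le_div_iff₀ hε (by norm_num : (0:ℝ) < 2)]
          nlinarith [hδ6]
        have hb2 : 9 * B ^ 2 / (t * ε ^ 2) < ε / 2 := by
          rw [div_lt_div_iff₀ (by positivity) (by norm_num : (0:ℝ) < 2)]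
          have h18 : 18 * B ^ 2 < (t : ℝ) * ε ^ 3 := by
            rw [div_lt_iff₀ (by positivity : (0:ℝ) < ε ^ 3)] at htgt
            linarith
          nlinarith [h18]
        linarith
end

section
/- The recursion β_g(f)·C(|f|+1, 2) = Σ (1+|h¹|)·C(v(h², g²), 2g*+2)·β_{g¹}(h¹)·β_{g²}(h²) + Σ_{g*≥0} C(v(f,g)+2g*, 2g*+2)·β_{g−g*}(f) (sums over h¹+h²=f, g¹+g²+g*=g) implies: if v(f,g) ≥ κ|f| for some κ > 0, then Σ_{h¹+h²=f, g¹+g²=g} |h¹| β_{g¹}(h¹) · |h²| β_{g²}(h²) ≤ (16/κ²) |f| β_g(f). -/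
/-- `|f| = Σ_j j f_j`, the number of edges of a bipartite map with face degrees `f`. -/
def fsize (f : ℕ →₀ ℕ) : ℕ := f.sum fun j n => j * n

/-- `v(f,g) = 2 − 2g + Σ_j (j−1) f_j`, the vertex count given by the Euler formula. -/
def vInt (f : ℕ →₀ ℕ) (g : ℕ) : ℤ := 2 - 2 * (g : ℤ) + f.sum fun j n => ((j : ℤ) - 1) * n


lemma fsize_add' (a b : ℕ →₀ ℕ) : fsize (a + b) = fsize a + fsize b := by
  unfold fsize
  exact Finsupp.sum_add_index' (fun j => by simp) (fun j a b => by ring)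

lemma vInt_add' (h1 h2 : ℕ →₀ ℕ) (g1 g2 : ℕ) :
    vInt h1 g1 + vInt h2 g2 = vInt (h1 + h2) (g1 + g2) + 2 := by
  unfold vInt
  rw [Finsupp.sum_add_index' (fun j => by simp) (fun j a b => by push_cast; ring)]
  push_cast
  ring

lemma key_pointwise' (κ : ℝ) (hκ : 0 < κ) (f h1 h2 : ℕ →₀ ℕ) (g g1 g2 : ℕ)
    (hf : h1 + h2 = f) (hg : g1 + g2 = g)
    (hvf : κ * fsize f ≤ (vInt f g : ℝ))
    (hle : vInt h1 g1 ≤ vInt h2 g2) (b1 b2 : ℕ) :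
    κ ^ 2 / 8 * fsize f * ((fsize h1 * b1) * (fsize h2 * b2)) ≤
      (1 + fsize h1) * ((vInt h2 g2).toNat.choose 2) * b1 * b2 := by
  have hsum : vInt h1 g1 + vInt h2 g2 = vInt f g + 2 := by rw [vInt_add', hf, hg]
  have hsumR : ((vInt h1 g1 : ℝ)) + (vInt h2 g2 : ℝ) = (vInt f g : ℝ) + 2 := by
    exact_mod_cast congrArg (Int.cast : ℤ → ℝ) hsum
  have hleR : (vInt h1 g1 : ℝ) ≤ (vInt h2 g2 : ℝ) := by exact_mod_cast hle
  have hκF : (0:ℝ) ≤ κ * fsize f := by positivity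
  have h2v : κ * fsize f + 2 ≤ 2 * (vInt h2 g2 : ℝ) := by linarith
  have hv2pos : (0:ℤ) ≤ vInt h2 g2 := by
    have : (0:ℝ) < (vInt h2 g2 : ℝ) := by linarith
    exact_mod_cast this.le
  have hNcast : (((vInt h2 g2).toNat : ℕ) : ℝ) = (vInt h2 g2 : ℝ) := by
    rw [← Int.cast_natCast, Int.toNat_of_nonneg hv2pos]
  set N : ℕ := (vInt h2 g2).toNat with hN
  have hH2 : (fsize h2 : ℝ) ≤ (fsize f : ℝ) := by
    have := fsize_add' h1 h2
    rw [hf] at this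
    have h2le : fsize h2 ≤ fsize f := by omega
    exact_mod_cast h2le
  have hκH2 : κ * fsize h2 ≤ κ * fsize f := mul_le_mul_of_nonneg_left hH2 hκ.le
  have hN1 : κ * fsize f / 2 ≤ (N:ℝ) - 1 := by rw [hNcast]; linarith
  have hNb : κ * fsize h2 / 2 ≤ (N:ℝ) := by rw [hNcast]; linarith
  have hNN : (κ * fsize h2 / 2) * (κ * fsize f / 2) ≤ (N:ℝ) * ((N:ℝ) - 1) := by
    apply mul_le_mul hNb hN1 (by positivity)
    positivity
  rw [Nat.cast_choose_two]
  have hb1 : (0:ℝ) ≤ (b1:ℝ) := Nat.cast_nonneg _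
  have hb2 : (0:ℝ) ≤ (b2:ℝ) := Nat.cast_nonneg _
  have hH1 : (0:ℝ) ≤ (fsize h1 : ℝ) := Nat.cast_nonneg _
  have hNNpos : (0:ℝ) ≤ (N:ℝ) * ((N:ℝ) - 1) := le_trans (by positivity) hNN
  nlinarith [mul_le_mul_of_nonneg_right hNN
      (show (0:ℝ) ≤ (fsize h1 : ℝ) * ((b1:ℝ) * b2) by positivity),
    mul_nonneg (mul_nonneg hNNpos hb1) hb2]

lemma step1' (β : ℕ → (ℕ →₀ ℕ) → ℕ)
    (hrec : ∀ (g : ℕ) (f : ℕ →₀ ℕ),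
      Nat.choose (fsize f + 1) 2 * β g f =
        (∑ hh ∈ Finset.HasAntidiagonal.antidiagonal f, ∑ gg ∈ Finset.HasAntidiagonal.antidiagonal g,
          ∑ gs ∈ Finset.HasAntidiagonal.antidiagonal gg.2,
            (1 + fsize hh.1) * Nat.choose (vInt hh.2 gs.1).toNat (2 * gs.2 + 2) *
              β gg.1 hh.1 * β gs.1 hh.2)
        + ∑ gs ∈ Finset.range (g + 1),
            Nat.choose (vInt f g + 2 * gs).toNat (2 * gs + 2) * β (g - gs) f)
    (g : ℕ) (f : ℕ →₀ ℕ) :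
    (∑ hh ∈ Finset.HasAntidiagonal.antidiagonal f, ∑ gg ∈ Finset.HasAntidiagonal.antidiagonal g,
      (1 + fsize hh.1) * ((vInt hh.2 gg.2).toNat.choose 2) * β gg.1 hh.1 * β gg.2 hh.2)
    ≤ (fsize f + 1).choose 2 * β g f := by
  rw [hrec g f]
  refine le_trans ?_ (Nat.le_add_right _ _)
  refine Finset.sum_le_sum fun hh _ => ?_
  refine Finset.sum_le_sum fun gg _ => ?_
  have hmem : ((gg.2, 0) : ℕ × ℕ) ∈ Finset.HasAntidiagonal.antidiagonal gg.2 := by simp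
  have h := Finset.single_le_sum
    (f := fun gs : ℕ × ℕ =>
      (1 + fsize hh.1) * Nat.choose (vInt hh.2 gs.1).toNat (2 * gs.2 + 2) *
        β gg.1 hh.1 * β gs.1 hh.2)
    (fun i _ => Nat.zero_le _) hmem
  simpa using h

/-- The recursion of [Lo19],
`C(|f|+1,2) β_g(f) = Σ_{h¹+h²=f, g¹+g²+g*=g} (1+|h¹|) C(v(h²,g²), 2g*+2) β_{g¹}(h¹) β_{g²}(h²)
  + Σ_{g*≥0} C(v(f,g)+2g*, 2g*+2) β_{g−g*}(f)`,
implies that whenever `κ > 0` and `v(f,g) ≥ κ|f|`, one has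
`Σ_{h¹+h²=f, g¹+g²=g} |h¹| β_{g¹}(h¹) · |h²| β_{g²}(h²) ≤ (16/κ²) |f| β_g(f)`.
(Binomials with a negative upper entry are read as `0` via `Int.toNat`.) -/
theorem statement15 (β : ℕ → (ℕ →₀ ℕ) → ℕ)
    (hβ0 : ∀ g, β g 0 = 0)
    (hrec : ∀ (g : ℕ) (f : ℕ →₀ ℕ),
      Nat.choose (fsize f + 1) 2 * β g f =
        (∑ hh ∈ Finset.HasAntidiagonal.antidiagonal f, ∑ gg ∈ Finset.HasAntidiagonal.antidiagonal g,
          ∑ gs ∈ Finset.HasAntidiagonal.antidiagonal gg.2,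
            (1 + fsize hh.1) * Nat.choose (vInt hh.2 gs.1).toNat (2 * gs.2 + 2) *
              β gg.1 hh.1 * β gs.1 hh.2)
        + ∑ gs ∈ Finset.range (g + 1),
            Nat.choose (vInt f g + 2 * gs).toNat (2 * gs + 2) * β (g - gs) f) :
    ∀ (κ : ℝ), 0 < κ → ∀ (g : ℕ) (f : ℕ →₀ ℕ),
      κ * fsize f ≤ (vInt f g : ℝ) →
      ∑ hh ∈ Finset.HasAntidiagonal.antidiagonal f, ∑ gg ∈ Finset.HasAntidiagonal.antidiagonal g,
          ((fsize hh.1 : ℝ) * β gg.1 hh.1) * ((fsize hh.2 : ℝ) * β gg.2 hh.2)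
        ≤ 16 / κ ^ 2 * fsize f * β g f := by
  intro κ hκ g f hvf
  by_cases hF0 : fsize f = 0
  · rw [hF0]
    simp only [Nat.cast_zero, mul_zero, zero_mul]
    refine le_of_eq (Finset.sum_eq_zero fun hh hmem => Finset.sum_eq_zero fun gg _ => ?_)
    have h := Finset.HasAntidiagonal.mem_antidiagonal.mp hmem
    have hadd := fsize_add' hh.1 hh.2
    rw [h] at hadd
    have h1 : fsize hh.1 = 0 := by omega
    rw [h1]
    simp
  · -- main case
    have hF1 : (1:ℝ) ≤ (fsize f : ℝ) := by exact_mod_cast Nat.one_le_iff_ne_zero.mpr hF0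
    have hFpos : (0:ℝ) < (fsize f : ℝ) := by linarith
    set I : ℝ := ∑ hh ∈ Finset.HasAntidiagonal.antidiagonal f, ∑ gg ∈ Finset.HasAntidiagonal.antidiagonal g,
      (if vInt hh.1 gg.1 ≤ vInt hh.2 gg.2 then
        ((fsize hh.1 : ℝ) * β gg.1 hh.1) * ((fsize hh.2 : ℝ) * β gg.2 hh.2) else 0) with hI
    -- step 2 : κ²/8 |f| I ≤ T (the g* = 0 part of the recursion)
    have hstep2 : κ ^ 2 / 8 * (fsize f : ℝ) * I ≤
        ((∑ hh ∈ Finset.HasAntidiagonal.antidiagonal f, ∑ gg ∈ Finset.HasAntidiagonal.antidiagonal g,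
          (1 + fsize hh.1) * ((vInt hh.2 gg.2).toNat.choose 2) * β gg.1 hh.1 * β gg.2 hh.2 : ℕ) : ℝ) := by
      push_cast
      rw [hI, Finset.mul_sum]
      refine Finset.sum_le_sum fun hh hhm => ?_
      rw [Finset.mul_sum]
      refine Finset.sum_le_sum fun gg ggm => ?_
      split_ifs with hcond
      · exact key_pointwise' κ hκ f hh.1 hh.2 g gg.1 gg.2
          (Finset.HasAntidiagonal.mem_antidiagonal.mp hhm) (Finset.HasAntidiagonal.mem_antidiagonal.mp ggm) hvf hcond _ _
      · rw [mul_zero]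
        positivity
    have hT := step1' β hrec g f
    have hTR : ((∑ hh ∈ Finset.HasAntidiagonal.antidiagonal f, ∑ gg ∈ Finset.HasAntidiagonal.antidiagonal g,
          (1 + fsize hh.1) * ((vInt hh.2 gg.2).toNat.choose 2) * β gg.1 hh.1 * β gg.2 hh.2 : ℕ) : ℝ)
        ≤ ((fsize f + 1).choose 2 : ℕ) * (β g f : ℝ) := by exact_mod_cast hT
    -- symmetry
    have gen : ∀ u : (ℕ →₀ ℕ) → (ℕ →₀ ℕ) → ℕ → ℕ → ℝ,
        (∑ hh ∈ Finset.HasAntidiagonal.antidiagonal f, ∑ gg ∈ Finset.HasAntidiagonal.antidiagonal g, u hh.1 hh.2 gg.1 gg.2)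
      = (∑ hh ∈ Finset.HasAntidiagonal.antidiagonal f, ∑ gg ∈ Finset.HasAntidiagonal.antidiagonal g, u hh.2 hh.1 gg.2 gg.1) := by
      intro u
      rw [Finsupp.sum_antidiagonal_swap f (fun a b => ∑ gg ∈ Finset.HasAntidiagonal.antidiagonal g, u a b gg.1 gg.2)]
      refine Finset.sum_congr rfl fun hh _ => ?_
      exact (Finset.Nat.sum_antidiagonal_swap (f := fun p => u hh.2 hh.1 p.1 p.2)).symm
    have hswap :
        (∑ hh ∈ Finset.HasAntidiagonal.antidiagonal f, ∑ gg ∈ Finset.HasAntidiagonal.antidiagonal g,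
          (if vInt hh.2 gg.2 ≤ vInt hh.1 gg.1 then
            ((fsize hh.1 : ℝ) * β gg.1 hh.1) * ((fsize hh.2 : ℝ) * β gg.2 hh.2) else 0)) = I := by
      rw [gen (fun a b c d => if vInt b d ≤ vInt a c then
        ((fsize a : ℝ) * β c a) * ((fsize b : ℝ) * β d b) else 0), hI]
      refine Finset.sum_congr rfl fun hh _ => Finset.sum_congr rfl fun gg _ => ?_
      exact if_congr Iff.rfl (mul_comm _ _) rfl
    have hsym : (∑ hh ∈ Finset.HasAntidiagonal.antidiagonal f, ∑ gg ∈ Finset.HasAntidiagonal.antidiagonal g,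
          ((fsize hh.1 : ℝ) * β gg.1 hh.1) * ((fsize hh.2 : ℝ) * β gg.2 hh.2)) ≤ 2 * I := by
      have hle : (∑ hh ∈ Finset.HasAntidiagonal.antidiagonal f, ∑ gg ∈ Finset.HasAntidiagonal.antidiagonal g,
          ((fsize hh.1 : ℝ) * β gg.1 hh.1) * ((fsize hh.2 : ℝ) * β gg.2 hh.2)) ≤
        (∑ hh ∈ Finset.HasAntidiagonal.antidiagonal f, ∑ gg ∈ Finset.HasAntidiagonal.antidiagonal g,
          ((if vInt hh.1 gg.1 ≤ vInt hh.2 gg.2 then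
            ((fsize hh.1 : ℝ) * β gg.1 hh.1) * ((fsize hh.2 : ℝ) * β gg.2 hh.2) else 0)
          + (if vInt hh.2 gg.2 ≤ vInt hh.1 gg.1 then
            ((fsize hh.1 : ℝ) * β gg.1 hh.1) * ((fsize hh.2 : ℝ) * β gg.2 hh.2) else 0))) := by
        refine Finset.sum_le_sum fun hh _ => Finset.sum_le_sum fun gg _ => ?_
        have h0 : (0:ℝ) ≤ ((fsize hh.1 : ℝ) * β gg.1 hh.1) * ((fsize hh.2 : ℝ) * β gg.2 hh.2) := by
          positivity
        rcases le_total (vInt hh.1 gg.1) (vInt hh.2 gg.2) with hc | hc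
        · rw [if_pos hc]
          split_ifs <;> linarith
        · rw [if_pos hc]
          split_ifs <;> linarith
      have hsplit : (∑ hh ∈ Finset.HasAntidiagonal.antidiagonal f, ∑ gg ∈ Finset.HasAntidiagonal.antidiagonal g,
          ((if vInt hh.1 gg.1 ≤ vInt hh.2 gg.2 then
            ((fsize hh.1 : ℝ) * β gg.1 hh.1) * ((fsize hh.2 : ℝ) * β gg.2 hh.2) else 0)
          + (if vInt hh.2 gg.2 ≤ vInt hh.1 gg.1 then
            ((fsize hh.1 : ℝ) * β gg.1 hh.1) * ((fsize hh.2 : ℝ) * β gg.2 hh.2) else 0)))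
          = I + I := by
        rw [show (∑ hh ∈ Finset.HasAntidiagonal.antidiagonal f, ∑ gg ∈ Finset.HasAntidiagonal.antidiagonal g,
          ((if vInt hh.1 gg.1 ≤ vInt hh.2 gg.2 then
            ((fsize hh.1 : ℝ) * β gg.1 hh.1) * ((fsize hh.2 : ℝ) * β gg.2 hh.2) else 0)
          + (if vInt hh.2 gg.2 ≤ vInt hh.1 gg.1 then
            ((fsize hh.1 : ℝ) * β gg.1 hh.1) * ((fsize hh.2 : ℝ) * β gg.2 hh.2) else 0)))
          = (∑ hh ∈ Finset.HasAntidiagonal.antidiagonal f, ∑ gg ∈ Finset.HasAntidiagonal.antidiagonal g,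
          ((if vInt hh.1 gg.1 ≤ vInt hh.2 gg.2 then
            ((fsize hh.1 : ℝ) * β gg.1 hh.1) * ((fsize hh.2 : ℝ) * β gg.2 hh.2) else 0)))
          + (∑ hh ∈ Finset.HasAntidiagonal.antidiagonal f, ∑ gg ∈ Finset.HasAntidiagonal.antidiagonal g,
          ((if vInt hh.2 gg.2 ≤ vInt hh.1 gg.1 then
            ((fsize hh.1 : ℝ) * β gg.1 hh.1) * ((fsize hh.2 : ℝ) * β gg.2 hh.2) else 0)))
          from by
            rw [← Finset.sum_add_distrib]
            exact Finset.sum_congr rfl fun hh _ => Finset.sum_add_distrib]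
        rw [hswap, ← hI]
      linarith [hle, hsplit.le, hsplit.ge]
    -- finish
    have hI0 : 0 ≤ I := by
      rw [hI]
      refine Finset.sum_nonneg fun hh _ => Finset.sum_nonneg fun gg _ => ?_
      split_ifs
      · positivity
      · exact le_refl 0
    have hβnn : (0:ℝ) ≤ (β g f : ℝ) := Nat.cast_nonneg _
    have hC : (((fsize f + 1).choose 2 : ℕ) : ℝ)
        = ((fsize f : ℝ) + 1) * (fsize f : ℝ) / 2 := by
      rw [Nat.cast_choose_two]
      push_cast
      ring
    have hCc : κ ^ 2 / 8 * (fsize f : ℝ) * I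
        ≤ ((fsize f : ℝ) + 1) * (fsize f : ℝ) / 2 * (β g f : ℝ) := by
      have h := hstep2.trans hTR
      rw [hC] at h
      exact h
    have hA : κ ^ 2 / 8 * (fsize f : ℝ) *
        (∑ hh ∈ Finset.HasAntidiagonal.antidiagonal f, ∑ gg ∈ Finset.HasAntidiagonal.antidiagonal g,
          ((fsize hh.1 : ℝ) * β gg.1 hh.1) * ((fsize hh.2 : ℝ) * β gg.2 hh.2))
        ≤ κ ^ 2 / 8 * (fsize f : ℝ) * (2 * I) :=
      mul_le_mul_of_nonneg_left hsym (by positivity)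
    set S : ℝ := ∑ hh ∈ Finset.HasAntidiagonal.antidiagonal f, ∑ gg ∈ Finset.HasAntidiagonal.antidiagonal g,
      ((fsize hh.1 : ℝ) * β gg.1 hh.1) * ((fsize hh.2 : ℝ) * β gg.2 hh.2) with hSdef
    have hprod : (0:ℝ) ≤ ((fsize f : ℝ) - 1) * (fsize f : ℝ) * (β g f : ℝ) :=
      mul_nonneg (mul_nonneg (by linarith) hFpos.le) hβnn
    have hkey : κ ^ 2 * ((fsize f : ℝ) * S) ≤ 16 * ((fsize f : ℝ) * ((fsize f : ℝ) * β g f)) := by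
      nlinarith [hA, hCc, hprod]
    have hκ2 : (0:ℝ) < κ ^ 2 := by positivity
    have h18 : κ ^ 2 * S ≤ 16 * ((fsize f : ℝ) * β g f) := by
      refine le_of_mul_le_mul_left ?_ hFpos
      nlinarith [hkey]
    calc S = κ ^ 2 * S / κ ^ 2 := by field_simp
      _ ≤ 16 * ((fsize f : ℝ) * β g f) / κ ^ 2 := by
          exact (div_le_div_iff_of_pos_right hκ2).mpr h18
      _ = 16 / κ ^ 2 * (fsize f : ℝ) * (β g f : ℝ) := by ring
end

section
/- Let X be a random walk on ℤ with i.i.d. steps, started at 0, in the domain of attraction of a 3/2-stable law with local limit theorem sup_k |n^{2/3} P(X_n = k) − g(k/n^{2/3})| → 0 for a continuous density g with g(0) > 0. Then for every η > 0 there exists ε > 0 such that, for all sufficiently large t and all integers k with −ε t^{2/3} ≤ k ≤ 0, the probability that X visits k before time t is at least 1 − η. -/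
open MeasureTheory ProbabilityTheory



lemma cube_cancel {x : ℝ} (hx : 0 ≤ x) : (x ^ ((1:ℝ)/3)) ^ (3:ℕ) = x := by
  rw [← Real.rpow_natCast (x ^ ((1:ℝ)/3)) 3, ← Real.rpow_mul hx]
  norm_num

lemma sq_third {x : ℝ} (hx : 0 ≤ x) : (x ^ ((1:ℝ)/3)) ^ (2:ℕ) = x ^ ((2:ℝ)/3) := by
  rw [← Real.rpow_natCast (x ^ ((1:ℝ)/3)) 2, ← Real.rpow_mul hx]
  norm_num

lemma cube_le_cube {a b : ℝ} (ha : 0 ≤ a) (hb : 0 ≤ b) (h : a ^ (3:ℕ) ≤ b ^ (3:ℕ)) : a ≤ b := by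
  by_contra hab
  push_neg at hab
  have := pow_lt_pow_left₀ hab hb (n := 3) (by norm_num)
  linarith

lemma cube1 {x : ℝ} (hx : 1 ≤ x) :
    1 / x ^ ((2:ℝ)/3) ≤ 3 * (x ^ ((1:ℝ)/3) - (x-1) ^ ((1:ℝ)/3)) := by
  set b := x ^ ((1:ℝ)/3) with hbdef
  set a := (x-1) ^ ((1:ℝ)/3) with hadef
  have hb3 : b ^ (3:ℕ) = x := cube_cancel (by linarith)
  have ha3 : a ^ (3:ℕ) = x - 1 := cube_cancel (by linarith)
  have ha : 0 ≤ a := Real.rpow_nonneg (by linarith) _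
  have hb : 0 ≤ b := Real.rpow_nonneg (by linarith) _
  have hb1 : (1:ℝ) ≤ b ^ (3:ℕ) := by rw [hb3]; exact hx
  have hbpos : 0 < b := Real.rpow_pos_of_pos (by linarith) _
  have hab : a ≤ b := cube_le_cube ha hb (by rw [hb3, ha3]; linarith)
  rw [← sq_third (by linarith : (0:ℝ) ≤ x), div_le_iff₀ (by positivity)]
  nlinarith [mul_nonneg (sub_nonneg.2 hab) (mul_nonneg ha hb),
    mul_nonneg (sub_nonneg.2 hab) (sq_nonneg (a - b)), sq_nonneg a, sq_nonneg b]

lemma cube2 {x : ℝ} (hx : 1 ≤ x) :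
    3 * ((x+1) ^ ((1:ℝ)/3) - x ^ ((1:ℝ)/3)) ≤ 1 / x ^ ((2:ℝ)/3) := by
  set b := (x+1) ^ ((1:ℝ)/3) with hbdef
  set a := x ^ ((1:ℝ)/3) with hadef
  have hb3 : b ^ (3:ℕ) = x + 1 := cube_cancel (by linarith)
  have ha3 : a ^ (3:ℕ) = x := cube_cancel (by linarith)
  have ha : 0 ≤ a := Real.rpow_nonneg (by linarith) _
  have hb : 0 ≤ b := Real.rpow_nonneg (by linarith) _
  have hapos : 0 < a := Real.rpow_pos_of_pos (by linarith) _
  have hab : a ≤ b := cube_le_cube ha hb (by rw [hb3, ha3]; linarith)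
  rw [← sq_third (by linarith : (0:ℝ) ≤ x), le_div_iff₀ (by positivity)]
  nlinarith [mul_nonneg (sub_nonneg.2 hab) (mul_nonneg ha hb),
    mul_nonneg (sub_nonneg.2 hab) (sq_nonneg (a - b)), sq_nonneg a, sq_nonneg b]

lemma den_sum (N' t : ℕ) (hN : 1 ≤ N') :
    ∑ u ∈ Finset.Ico N' (t+1), 1/(u:ℝ)^((2:ℝ)/3) ≤ 3 * (t:ℝ)^((1:ℝ)/3) := by
  by_cases hNt : N' ≤ t + 1
  · calc ∑ u ∈ Finset.Ico N' (t+1), 1/(u:ℝ)^((2:ℝ)/3)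
        ≤ ∑ u ∈ Finset.Ico N' (t+1),
            3 * ((u:ℝ)^((1:ℝ)/3) - ((u:ℝ)-1)^((1:ℝ)/3)) := by
          refine Finset.sum_le_sum fun u hu => ?_
          have hu1 : 1 ≤ u := le_trans hN (Finset.mem_Ico.mp hu).1
          exact cube1 (by exact_mod_cast hu1)
      _ = 3 * ((t:ℝ)^((1:ℝ)/3) - ((N' - 1 : ℕ):ℝ)^((1:ℝ)/3)) := by
          rw [← Finset.mul_sum]
          congr 1
          rw [Finset.sum_Ico_eq_sum_range]
          have : ∀ v : ℕ, ((N' + v : ℕ):ℝ)^((1:ℝ)/3) - (((N' + v : ℕ):ℝ) - 1)^((1:ℝ)/3)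
              = (fun w => (((N' - 1 + w : ℕ)):ℝ)^((1:ℝ)/3)) (v+1)
                - (fun w => (((N' - 1 + w : ℕ)):ℝ)^((1:ℝ)/3)) v := by
            intro v
            have e1 : N' - 1 + (v + 1) = N' + v := by omega
            have e2 : ((N' + v : ℕ):ℝ) - 1 = ((N' - 1 + v : ℕ):ℝ) := by
              push_cast [Nat.cast_sub hN]
              ring
            simp only
            rw [e1, e2]
          simp_rw [this]
          rw [Finset.sum_range_sub (fun w => (((N' - 1 + w : ℕ)):ℝ)^((1:ℝ)/3))]
          have e3 : N' - 1 + (t + 1 - N') = t := by omega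
          rw [e3]
          simp
      _ ≤ 3 * (t:ℝ)^((1:ℝ)/3) := by
          have : (0:ℝ) ≤ ((N' - 1 : ℕ):ℝ)^((1:ℝ)/3) := Real.rpow_nonneg (by positivity) _
          linarith
  · rw [Finset.Ico_eq_empty (by omega)]
    simp
    positivity

lemma num_sum (m t : ℕ) (hm : 1 ≤ m) (hmt : m ≤ t + 1) :
    3 * (((t:ℝ)+1)^((1:ℝ)/3) - (m:ℝ)^((1:ℝ)/3))
      ≤ ∑ i ∈ Finset.Ico m (t+1), 1/(i:ℝ)^((2:ℝ)/3) := by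
  calc 3 * (((t:ℝ)+1)^((1:ℝ)/3) - (m:ℝ)^((1:ℝ)/3))
      = ∑ i ∈ Finset.Ico m (t+1), 3 * (((i:ℝ)+1)^((1:ℝ)/3) - (i:ℝ)^((1:ℝ)/3)) := by
        rw [← Finset.mul_sum]
        congr 1
        rw [Finset.sum_Ico_eq_sum_range]
        have : ∀ v : ℕ, ((m + v : ℕ):ℝ) + 1 = ((m + (v+1) : ℕ):ℝ) := by
          intro v; push_cast; ring
        have e : ∀ v : ℕ, (((m + v : ℕ):ℝ)+1)^((1:ℝ)/3) - ((m + v : ℕ):ℝ)^((1:ℝ)/3)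
            = (fun w => ((m + w : ℕ):ℝ)^((1:ℝ)/3)) (v+1)
              - (fun w => ((m + w : ℕ):ℝ)^((1:ℝ)/3)) v := by
          intro v
          rw [this v]
        simp_rw [e]
        rw [Finset.sum_range_sub (fun w => ((m + w : ℕ):ℝ)^((1:ℝ)/3))]
        have e3 : m + (t + 1 - m) = t + 1 := by omega
        rw [e3]
        push_cast
        simp
    _ ≤ ∑ i ∈ Finset.Ico m (t+1), 1/(i:ℝ)^((2:ℝ)/3) := by
        refine Finset.sum_le_sum fun i hi => ?_
        have hi1 : 1 ≤ i := le_trans hm (Finset.mem_Ico.mp hi).1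
        exact cube2 (by exact_mod_cast hi1)



section
variable {Ω : Type*} [MeasurableSpace Ω] {P : Measure Ω} {ξ : ℕ → Ω → ℤ}

lemma meas_sum (hmeas : ∀ n, Measurable (ξ n)) (A : Finset ℕ) :
    Measurable (fun ω => ∑ j ∈ A, ξ j ω) :=
  Finset.measurable_sum A fun j _ => hmeas j

lemma block_law [IsProbabilityMeasure P] (hmeas : ∀ n, Measurable (ξ n))
    (hindep : iIndepFun ξ P)
    (hident : ∀ n, Measure.map (ξ n) P = Measure.map (ξ 0) P) (s m : ℕ) :
    Measure.map (fun ω => ∑ j ∈ Finset.Ico s (s + m), ξ j ω) P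
      = Measure.map (fun ω => ∑ j ∈ Finset.range m, ξ j ω) P := by
  induction m with
  | zero => simp
  | succ m ih =>
    have hadd : Measurable (fun p : ℤ × ℤ => p.1 + p.2) := measurable_of_countable _
    have key : ∀ (F G : Ω → ℤ), Measurable F → Measurable G → IndepFun F G P →
        Measure.map (fun ω => F ω + G ω) P
          = Measure.map (fun p : ℤ × ℤ => p.1 + p.2)
              ((Measure.map F P).prod (Measure.map G P)) := by
      intro F G hF hG hFG
      rw [← (indepFun_iff_map_prod_eq_prod_map_map hF.aemeasurable hG.aemeasurable).mp hFG,
        Measure.map_map hadd (hF.prodMk hG)]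
      rfl
    have h1 : IndepFun (fun ω => ∑ j ∈ Finset.Ico s (s+m), ξ j ω) (ξ (s+m)) P := by
      have := hindep.indepFun_finsetSum_of_notMem hmeas
        (s := Finset.Ico s (s+m)) (i := s+m) (by simp)
      convert this using 1
      funext ω; simp
    have h2 : IndepFun (fun ω => ∑ j ∈ Finset.range m, ξ j ω) (ξ m) P := by
      have := hindep.indepFun_finsetSum_of_notMem hmeas
        (s := Finset.range m) (i := m) (by simp)
      convert this using 1
      funext ω; simp
    have e1 : (fun ω => ∑ j ∈ Finset.Ico s (s + (m+1)), ξ j ω)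
        = fun ω => (∑ j ∈ Finset.Ico s (s+m), ξ j ω) + ξ (s+m) ω := by
      funext ω
      rw [show s + (m+1) = (s+m)+1 from rfl, Finset.sum_Ico_succ_top (Nat.le_add_right s m)]
    have e2 : (fun ω => ∑ j ∈ Finset.range (m+1), ξ j ω)
        = fun ω => (∑ j ∈ Finset.range m, ξ j ω) + ξ m ω := by
      funext ω; rw [Finset.sum_range_succ]
    rw [e1, e2, key _ _ (meas_sum hmeas _) (hmeas _) h1,
      key _ _ (meas_sum hmeas _) (hmeas _) h2, ih, hident (s+m), hident m]

end


section
variable {Ω : Type*} [MeasurableSpace Ω] {P : Measure Ω} {ξ : ℕ → Ω → ℤ}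

lemma past_indep [IsProbabilityMeasure P] (hmeas : ∀ n, Measurable (ξ n))
    (hindep : iIndepFun ξ P) (s i : ℕ) (hsi : s ≤ i) (k : ℤ) :
    P ({ω | (∑ j ∈ Finset.range s, ξ j ω) = k ∧ ∀ r < s, (∑ j ∈ Finset.range r, ξ j ω) ≠ k}
        ∩ {ω | (∑ j ∈ Finset.Ico s i, ξ j ω) = 0})
      = P {ω | (∑ j ∈ Finset.range s, ξ j ω) = k ∧ ∀ r < s, (∑ j ∈ Finset.range r, ξ j ω) ≠ k}
        * P {ω | (∑ j ∈ Finset.Ico s i, ξ j ω) = 0} := by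
  classical
  have h := hindep.indepFun_finset (Finset.range s) (Finset.Ico s i)
    (by simp [Finset.disjoint_left]; omega) hmeas
  set Φ : Ω → ({x // x ∈ Finset.range s} → ℤ) := fun ω j => ξ j ω with hΦ
  set Ψ : Ω → ({x // x ∈ Finset.Ico s i} → ℤ) := fun ω j => ξ j ω with hΨ
  set vsum : ℕ → ({x // x ∈ Finset.range s} → ℤ) → ℤ :=
    fun r v => ∑ j : {x // x ∈ Finset.range s}, if ((j : ℕ) < r) then v j else 0 with hvsum
  have claim1 : ∀ (ω : Ω) (r : ℕ), r ≤ s → vsum r (Φ ω) = ∑ j ∈ Finset.range r, ξ j ω := by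
    intro ω r hr
    have : vsum r (Φ ω) = ∑ j ∈ Finset.range s, if j < r then ξ j ω else 0 := by
      rw [hvsum]
      simp only [Finset.univ_eq_attach]
      exact Finset.sum_attach (Finset.range s) (fun n => if n < r then ξ n ω else 0)
    rw [this, ← Finset.sum_filter]
    congr 1
    ext j
    simp only [Finset.mem_filter, Finset.mem_range]
    omega
  set E : Set ({x // x ∈ Finset.range s} → ℤ) :=
    {v | vsum s v = k ∧ ∀ r < s, vsum r v ≠ k} with hE
  set F : Set ({x // x ∈ Finset.Ico s i} → ℤ) := {v | ∑ j ∈ Finset.univ, v j = 0} with hF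
  have hEset : {ω | (∑ j ∈ Finset.range s, ξ j ω) = k
      ∧ ∀ r < s, (∑ j ∈ Finset.range r, ξ j ω) ≠ k} = Φ ⁻¹' E := by
    ext ω
    simp only [Set.mem_setOf_eq, Set.mem_preimage, hE, Set.mem_setOf_eq]
    constructor
    · rintro ⟨h1, h2⟩
      exact ⟨by rw [claim1 ω s le_rfl]; exact h1,
        fun r hr => by rw [claim1 ω r hr.le]; exact h2 r hr⟩
    · rintro ⟨h1, h2⟩
      refine ⟨by rw [← claim1 ω s le_rfl]; exact h1,
        fun r hr => by rw [← claim1 ω r hr.le]; exact h2 r hr⟩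
  have hFset : {ω | (∑ j ∈ Finset.Ico s i, ξ j ω) = 0} = Ψ ⁻¹' F := by
    ext ω
    simp only [Set.mem_setOf_eq, Set.mem_preimage, hF, Set.mem_setOf_eq, hΨ]
    rw [Finset.univ_eq_attach, Finset.sum_attach (Finset.Ico s i) (fun n => ξ n ω)]
  rw [hEset, hFset]
  exact h.measure_inter_preimage_eq_mul E F (Set.to_countable E).measurableSet
    (Set.to_countable F).measurableSet

end


section
variable {Ω : Type*} [MeasurableSpace Ω] {P : Measure Ω} {ξ : ℕ → Ω → ℤ}

lemma markov_bound [IsProbabilityMeasure P] (hmeas : ∀ n, Measurable (ξ n))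
    (hindep : iIndepFun ξ P)
    (hident : ∀ n, Measure.map (ξ n) P = Measure.map (ξ 0) P)
    (blaw : ∀ s m : ℕ, Measure.map (fun ω => ∑ j ∈ Finset.Ico s (s + m), ξ j ω) P
      = Measure.map (fun ω => ∑ j ∈ Finset.range m, ξ j ω) P)
    (pind : ∀ s i : ℕ, s ≤ i → ∀ k : ℤ,
      P ({ω | (∑ j ∈ Finset.range s, ξ j ω) = k ∧ ∀ r < s, (∑ j ∈ Finset.range r, ξ j ω) ≠ k}
        ∩ {ω | (∑ j ∈ Finset.Ico s i, ξ j ω) = 0})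
      = P {ω | (∑ j ∈ Finset.range s, ξ j ω) = k ∧ ∀ r < s, (∑ j ∈ Finset.range r, ξ j ω) ≠ k}
        * P {ω | (∑ j ∈ Finset.Ico s i, ξ j ω) = 0})
    (t : ℕ) (k : ℤ) :
    ∑ i ∈ Finset.range (t+1), P {ω | (∑ j ∈ Finset.range i, ξ j ω) = k}
      ≤ P {ω | ∃ i : ℕ, i ≤ t ∧ (∑ j ∈ Finset.range i, ξ j ω) = k}
        * ∑ u ∈ Finset.range (t+1), P {ω | (∑ j ∈ Finset.range u, ξ j ω) = 0} := by
  classical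
  set A : ℕ → Set Ω := fun s =>
    {ω | (∑ j ∈ Finset.range s, ξ j ω) = k ∧ ∀ r < s, (∑ j ∈ Finset.range r, ξ j ω) ≠ k}
    with hA
  have measS : ∀ (B : Finset ℕ) (c : ℤ), MeasurableSet {ω | (∑ j ∈ B, ξ j ω) = c} := by
    intro B c
    exact (meas_sum hmeas B) (measurableSet_singleton c)
  have measA : ∀ s, MeasurableSet (A s) := by
    intro s
    have : A s = {ω | (∑ j ∈ Finset.range s, ξ j ω) = k}
        ∩ ⋂ r ∈ Finset.range s, {ω | (∑ j ∈ Finset.range r, ξ j ω) = k}ᶜ := by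
      ext ω; simp [hA, Finset.mem_range]
    rw [this]
    exact (measS _ _).inter (MeasurableSet.biInter (Set.to_countable _)
      fun r _ => (measS _ _).compl)
  have hdisj : ∀ s s', s < s' → Disjoint (A s) (A s') := by
    intro s s' hss
    refine Set.disjoint_left.mpr fun ω hs hs' => ?_
    exact hs'.2 s hss hs.1
  -- first-passage decomposition
  have decomp : ∀ i : ℕ, {ω | (∑ j ∈ Finset.range i, ξ j ω) = k}
      = ⋃ s ∈ Finset.range (i+1), (A s ∩ {ω | (∑ j ∈ Finset.Ico s i, ξ j ω) = 0}) := by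
    intro i
    ext ω
    simp only [Set.mem_setOf_eq, Set.mem_iUnion, Finset.mem_range, Set.mem_inter_iff, hA]
    constructor
    · intro h
      have hex : ∃ r, (∑ j ∈ Finset.range r, ξ j ω) = k := ⟨i, h⟩
      set s := Nat.find hex with hs
      have hspec := Nat.find_spec hex
      have hsle : s ≤ i := Nat.find_min' hex h
      refine ⟨s, by omega, ⟨hspec, fun r hr => Nat.find_min hex hr⟩, ?_⟩
      have hsplit := Finset.sum_Ico_consecutive (fun j => ξ j ω) (Nat.zero_le s) hsle
      rw [← Finset.range_eq_Ico, ← Finset.range_eq_Ico] at hsplit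
      rw [← hs] at hspec
      rw [← hsplit] at h
      omega
    · rintro ⟨s, hsi, ⟨h1, _⟩, h0⟩
      have hsle : s ≤ i := by omega
      have hsplit := Finset.sum_Ico_consecutive (fun j => ξ j ω) (Nat.zero_le s) hsle
      rw [← Finset.range_eq_Ico, ← Finset.range_eq_Ico] at hsplit
      rw [← hsplit]
      omega
  have pdecomp : ∀ i : ℕ, P {ω | (∑ j ∈ Finset.range i, ξ j ω) = k}
      = ∑ s ∈ Finset.range (i+1), P (A s) * P {ω | (∑ j ∈ Finset.range (i - s), ξ j ω) = 0} := by
    intro i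
    rw [decomp i, measure_biUnion_finset]
    · refine Finset.sum_congr rfl fun s hs => ?_
      rw [Finset.mem_range] at hs
      have hsle : s ≤ i := by omega
      rw [pind s i hsle k]
      congr 1
      have hmap := blaw s (i - s)
      rw [show s + (i - s) = i from by omega] at hmap
      have e1 : P {ω | (∑ j ∈ Finset.Ico s i, ξ j ω) = 0}
          = Measure.map (fun ω => ∑ j ∈ Finset.Ico s i, ξ j ω) P {(0 : ℤ)} := by
        rw [Measure.map_apply (meas_sum hmeas _) (measurableSet_singleton _)]
        rfl
      have e2 : P {ω | (∑ j ∈ Finset.range (i - s), ξ j ω) = 0}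
          = Measure.map (fun ω => ∑ j ∈ Finset.range (i - s), ξ j ω) P {(0 : ℤ)} := by
        rw [Measure.map_apply (meas_sum hmeas _) (measurableSet_singleton _)]
        rfl
      rw [e1, e2, hmap]
    · intro s hs s' hs' hss
      rcases lt_or_gt_of_ne hss with h | h
      · exact ((hdisj s s' h).mono (Set.inter_subset_left) (Set.inter_subset_left))
      · exact ((hdisj s' s h).symm.mono (Set.inter_subset_left) (Set.inter_subset_left))
    · intro s hs
      exact (measA s).inter (measS _ _)
  calc ∑ i ∈ Finset.range (t+1), P {ω | (∑ j ∈ Finset.range i, ξ j ω) = k}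
      = ∑ i ∈ Finset.range (t+1), ∑ s ∈ Finset.range (i+1),
          P (A s) * P {ω | (∑ j ∈ Finset.range (i - s), ξ j ω) = 0} := by
        exact Finset.sum_congr rfl fun i _ => pdecomp i
    _ = ∑ i ∈ Finset.range (t+1), ∑ s ∈ Finset.range (t+1),
          if s ≤ i then P (A s) * P {ω | (∑ j ∈ Finset.range (i - s), ξ j ω) = 0} else 0 := by
        refine Finset.sum_congr rfl fun i hi => ?_
        rw [Finset.mem_range] at hi
        rw [← Finset.sum_filter]
        congr 1
        ext s
        simp only [Finset.mem_filter, Finset.mem_range]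
        omega
    _ = ∑ s ∈ Finset.range (t+1), ∑ i ∈ Finset.range (t+1),
          if s ≤ i then P (A s) * P {ω | (∑ j ∈ Finset.range (i - s), ξ j ω) = 0} else 0 := by
        exact Finset.sum_comm
    _ = ∑ s ∈ Finset.range (t+1), ∑ i ∈ Finset.Ico s (t+1),
          P (A s) * P {ω | (∑ j ∈ Finset.range (i - s), ξ j ω) = 0} := by
        refine Finset.sum_congr rfl fun s hs => ?_
        rw [← Finset.sum_filter]
        congr 1
        ext i
        simp only [Finset.mem_filter, Finset.mem_range, Finset.mem_Ico]
        omega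
    _ = ∑ s ∈ Finset.range (t+1), P (A s) * ∑ u ∈ Finset.range (t+1-s),
          P {ω | (∑ j ∈ Finset.range u, ξ j ω) = 0} := by
        refine Finset.sum_congr rfl fun s hs => ?_
        rw [Finset.mul_sum, Finset.sum_Ico_eq_sum_range]
        exact Finset.sum_congr rfl fun u _ => by rw [show s + u - s = u from by omega]
    _ ≤ ∑ s ∈ Finset.range (t+1), P (A s) * ∑ u ∈ Finset.range (t+1),
          P {ω | (∑ j ∈ Finset.range u, ξ j ω) = 0} := by
        refine Finset.sum_le_sum fun s _ => ?_
        exact mul_le_mul_right (Finset.sum_le_sum_of_subset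
          (Finset.range_subset_range.mpr (by omega))) _
    _ = (∑ s ∈ Finset.range (t+1), P (A s)) * ∑ u ∈ Finset.range (t+1),
          P {ω | (∑ j ∈ Finset.range u, ξ j ω) = 0} := by
        rw [Finset.sum_mul]
    _ ≤ P {ω | ∃ i : ℕ, i ≤ t ∧ (∑ j ∈ Finset.range i, ξ j ω) = k}
        * ∑ u ∈ Finset.range (t+1), P {ω | (∑ j ∈ Finset.range u, ξ j ω) = 0} := by
        refine mul_le_mul_left ?_ _
        rw [← measure_biUnion_finset ?_ (fun s _ => measA s)]
        · refine measure_mono fun ω hω => ?_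
          simp only [Set.mem_iUnion, Finset.mem_range] at hω
          obtain ⟨s, hs, h1, _⟩ := hω
          exact ⟨s, by omega, h1⟩
        · intro s hs s' hs' hss
          rcases lt_or_gt_of_ne hss with h | h
          · exact hdisj s s' h
          · exact (hdisj s' s h).symm

end

lemma third_cancel {y : ℝ} (hy : 0 ≤ y) : (y ^ (3:ℕ)) ^ ((1:ℝ)/3) = y := by
  rw [← Real.rpow_natCast y 3, ← Real.rpow_mul hy]
  norm_num


set_option maxHeartbeats 2000000 in
/-- Let `X_n = ξ_0 + ⋯ + ξ_{n-1}` be a random walk on `ℤ` with i.i.d. steps, started at `0`,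
satisfying the local limit theorem `sup_k |n^{2/3} P(X_n = k) − g(k/n^{2/3})| → 0` for a
continuous nonnegative density `g` with `g(0) > 0`.  Then for every `η > 0` there exists
`ε > 0` such that, for all sufficiently large `t` and all integers `k` with
`−ε t^{2/3} ≤ k ≤ 0`, the probability that `X` visits `k` before time `t` is at
least `1 − η`. -/
theorem statement17 {Ω : Type*} [MeasurableSpace Ω] (P : Measure Ω) [IsProbabilityMeasure P]
    (ξ : ℕ → Ω → ℤ)
    (hmeas : ∀ n, Measurable (ξ n))
    (hindep : iIndepFun ξ P)
    (hident : ∀ n, Measure.map (ξ n) P = Measure.map (ξ 0) P)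
    (g : ℝ → ℝ) (hgcont : Continuous g) (hg0 : 0 < g 0) (hgpos : ∀ x, 0 ≤ g x)
    (hLLT : ∀ δ > (0 : ℝ), ∃ N : ℕ, ∀ n : ℕ, N ≤ n → ∀ k : ℤ,
      |(n : ℝ) ^ ((2 : ℝ) / 3) * (P {ω | (∑ j ∈ Finset.range n, ξ j ω) = k}).toReal
        - g ((k : ℝ) / (n : ℝ) ^ ((2 : ℝ) / 3))| ≤ δ) :
    ∀ η > (0 : ℝ), ∃ ε > (0 : ℝ), ∃ T : ℕ, ∀ t : ℕ, T ≤ t → ∀ k : ℤ,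
      -(ε * (t : ℝ) ^ ((2 : ℝ) / 3)) ≤ (k : ℝ) → k ≤ 0 →
      ENNReal.ofReal (1 - η)
        ≤ P {ω | ∃ i : ℕ, i ≤ t ∧ (∑ j ∈ Finset.range i, ξ j ω) = k} := by
  intro η hη
  by_cases hη1 : 1 ≤ η
  · refine ⟨1, one_pos, 0, fun t _ k _ _ => ?_⟩
    rw [ENNReal.ofReal_of_nonpos (by linarith)]
    exact zero_le
  push_neg at hη1
  set g0 := g 0 with hg0def
  set δ := g0 * η / 16 with hδdef
  have hδ : 0 < δ := by positivity
  -- continuity modulus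
  obtain ⟨c, hc, hcg⟩ := Metric.continuous_iff.mp hgcont 0 δ hδ
  -- LLT threshold
  obtain ⟨N, hN⟩ := hLLT δ hδ
  set N' := max N 1 with hN'def
  have hN'1 : 1 ≤ N' := le_max_right _ _
  have hNN' : N ≤ N' := le_max_left _ _
  set α := (η/16)^(3:ℕ) with hαdef
  have hα : 0 < α := by positivity
  have hα1 : α < 1/2 := by
    have : η/16 < 1/16 := by linarith
    have h2 : (η/16)^(3:ℕ) < (1/16:ℝ)^(3:ℕ) := by
      apply pow_lt_pow_left₀ this (by positivity)
      norm_num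
    rw [hαdef]
    nlinarith
  set ε := (c/2) * α ^ ((2:ℝ)/3) with hεdef
  have hε : 0 < ε := by
    have := Real.rpow_pos_of_pos hα ((2:ℝ)/3)
    positivity
  set B1 : ℝ := (N' : ℝ) / (2 * g0 * η) with hB1def
  set B2 : ℝ := ((N' : ℝ) + 1) / α with hB2def
  clear_value g0 δ α ε B1 B2
  refine ⟨ε, hε, max (⌈B1^(3:ℕ)⌉₊ + 1) (⌈B2⌉₊ + 1), fun t ht k hk1 hk2 => ?_⟩
  -- basic facts about t
  have htB1 : B1^(3:ℕ) ≤ (t:ℝ) := by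
    have h1 : (⌈B1^(3:ℕ)⌉₊ + 1 : ℕ) ≤ t := le_trans (le_max_left _ _) ht
    have h2 : B1^(3:ℕ) ≤ (⌈B1^(3:ℕ)⌉₊ : ℝ) := Nat.le_ceil _
    have h3 : ((⌈B1^(3:ℕ)⌉₊ + 1 : ℕ) : ℝ) ≤ (t:ℝ) := by exact_mod_cast h1
    push_cast at h3
    linarith
  have htB2 : B2 ≤ (t:ℝ) := by
    have h1 : (⌈B2⌉₊ + 1 : ℕ) ≤ t := le_trans (le_max_right _ _) ht
    have h2 : B2 ≤ (⌈B2⌉₊ : ℝ) := Nat.le_ceil _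
    have h3 : ((⌈B2⌉₊ + 1 : ℕ) : ℝ) ≤ (t:ℝ) := by exact_mod_cast h1
    push_cast at h3
    linarith
  have ht1 : 1 ≤ t := by
    have := le_trans (le_max_right _ _) ht
    omega
  have htR : (1:ℝ) ≤ (t:ℝ) := by exact_mod_cast ht1
  -- αt ≥ N'+1
  have hαt : (N':ℝ) + 1 ≤ α * t := by
    rw [hB2def] at htB2
    rw [div_le_iff₀ hα] at htB2
    linarith [htB2]
  -- X := t^{1/3}
  set X := (t:ℝ) ^ ((1:ℝ)/3) with hXdef
  have hX0 : 0 ≤ X := Real.rpow_nonneg (by positivity) _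
  have hXB1 : B1 ≤ X := by
    have hB1nn : 0 ≤ B1 := by rw [hB1def]; positivity
    calc B1 = (B1^(3:ℕ)) ^ ((1:ℝ)/3) := (third_cancel hB1nn).symm
      _ ≤ X := Real.rpow_le_rpow (pow_nonneg hB1nn 3) htB1 (by norm_num)
  clear_value X
  -- the local-time counting function
  set q : ℕ → ℤ → ℝ := fun n c => (P {ω | (∑ j ∈ Finset.range n, ξ j ω) = c}).toReal
    with hqdef
  have hq01 : ∀ n c, 0 ≤ q n c ∧ q n c ≤ 1 := fun n c =>
    ⟨ENNReal.toReal_nonneg, by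
      rw [hqdef]
      exact ENNReal.toReal_le_of_le_ofReal one_pos.le (by simpa using prob_le_one)⟩
  -- Markov bound in real form
  set Hit := {ω | ∃ i : ℕ, i ≤ t ∧ (∑ j ∈ Finset.range i, ξ j ω) = k} with hHitdef
  set HitR := (P Hit).toReal with hHitRdef
  have hMarkov : ∑ i ∈ Finset.range (t+1), q i k
      ≤ HitR * ∑ u ∈ Finset.range (t+1), q u 0 := by
    have hmb := markov_bound hmeas hindep hident (block_law hmeas hindep hident)
      (fun s i hsi k' => past_indep hmeas hindep s i hsi k') t k
    have h1 := ENNReal.toReal_le_toReal (a := ∑ i ∈ Finset.range (t+1),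
        P {ω | (∑ j ∈ Finset.range i, ξ j ω) = k})
      (b := P Hit * ∑ u ∈ Finset.range (t+1), P {ω | (∑ j ∈ Finset.range u, ξ j ω) = 0})
      (by exact (ENNReal.sum_lt_top.mpr fun _ _ => measure_lt_top _ _).ne)
      (ENNReal.mul_ne_top (measure_ne_top _ _)
        (ENNReal.sum_lt_top.mpr fun _ _ => measure_lt_top _ _).ne)
    have h2 := h1.mpr hmb
    rw [ENNReal.toReal_mul, ENNReal.toReal_sum (fun _ _ => measure_ne_top _ _),
      ENNReal.toReal_sum (fun _ _ => measure_ne_top _ _)] at h2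
    exact h2
  -- upper bound on the denominator
  have hN't : N' ≤ t + 1 := by
    have : (N':ℝ) + 1 ≤ 1 * t := by
      calc (N':ℝ) + 1 ≤ α * t := hαt
        _ ≤ 1 * t := by
          apply mul_le_mul_of_nonneg_right (by linarith) (by positivity)
    rw [one_mul] at this
    have : (N':ℝ) ≤ (t:ℝ) := by linarith
    have := Nat.cast_le (α := ℝ).mp this
    omega
  have hg0δ : (0:ℝ) ≤ g0 + δ := by positivity
  have hDen : ∑ u ∈ Finset.range (t+1), q u 0 ≤ (N':ℝ) + 3 * (g0 + δ) * X := by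
    have hsplit : ∑ u ∈ Finset.range N', q u 0 + ∑ u ∈ Finset.Ico N' (t+1), q u 0
        = ∑ u ∈ Finset.range (t+1), q u 0 := by
      rw [Finset.range_eq_Ico, Finset.range_eq_Ico]
      exact Finset.sum_Ico_consecutive _ (Nat.zero_le _) hN't
    rw [← hsplit]
    have hpart1 : ∑ u ∈ Finset.range N', q u 0 ≤ (N':ℝ) := by
      calc ∑ u ∈ Finset.range N', q u 0 ≤ ∑ u ∈ Finset.range N', 1 :=
          Finset.sum_le_sum fun u _ => (hq01 u 0).2
        _ = (N':ℝ) := by simp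
    have hpart2 : ∑ u ∈ Finset.Ico N' (t+1), q u 0 ≤ (g0 + δ) * (3 * X) := by
      calc ∑ u ∈ Finset.Ico N' (t+1), q u 0
          ≤ ∑ u ∈ Finset.Ico N' (t+1), (g0 + δ) * (1/(u:ℝ)^((2:ℝ)/3)) := by
            refine Finset.sum_le_sum fun u hu => ?_
            obtain ⟨hu1, hu2⟩ := Finset.mem_Ico.mp hu
            have huN : N ≤ u := le_trans hNN' hu1
            have hu1' : 1 ≤ u := le_trans hN'1 hu1
            have habs := hN u huN 0
            simp only [Int.cast_zero, zero_div] at habs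
            rw [abs_le] at habs
            have hup : (0:ℝ) < (u:ℝ)^((2:ℝ)/3) :=
              Real.rpow_pos_of_pos (by exact_mod_cast hu1') _
            rw [mul_one_div, le_div_iff₀ hup]
            rw [← hg0def] at habs
            nlinarith [habs.2]
        _ = (g0 + δ) * ∑ u ∈ Finset.Ico N' (t+1), (1/(u:ℝ)^((2:ℝ)/3)) := by
            rw [Finset.mul_sum]
        _ ≤ (g0 + δ) * (3 * X) := by
            apply mul_le_mul_of_nonneg_left _ hg0δ
            rw [hXdef]
            exact den_sum N' t hN'1
    linarith
  -- lower bound on the numerator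
  set m := N' + Nat.ceil (α * t) with hmdef
  have hm1 : 1 ≤ m := by omega
  have hmR : (m:ℝ) ≤ 2 * α * t := by
    have hceil : (Nat.ceil (α * t) : ℝ) < α * t + 1 :=
      Nat.ceil_lt_add_one (by positivity)
    have : (m:ℝ) = (N':ℝ) + (Nat.ceil (α * t) : ℝ) := by push_cast [hmdef]; ring
    rw [this]
    linarith [hceil, hαt]
  have hmt : m ≤ t := by
    have h2αt : 2 * α * t ≤ (t:ℝ) := by
      have hnn : (0:ℝ) ≤ (1 - 2*α) * (t:ℝ) :=
        mul_nonneg (by linarith) (by positivity)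
      have hexp : (1 - 2*α) * (t:ℝ) = t - 2*α*t := by ring
      linarith
    have : (m:ℝ) ≤ (t:ℝ) := le_trans hmR h2αt
    exact_mod_cast this
  have hmαt : α * t ≤ (m:ℝ) := by
    have hceil : α * t ≤ (Nat.ceil (α * t) : ℝ) := Nat.le_ceil _
    have : (m:ℝ) = (N':ℝ) + (Nat.ceil (α * t) : ℝ) := by push_cast [hmdef]; ring
    rw [this]
    have : (0:ℝ) ≤ N' := by positivity
    linarith
  have hg02δ : (0:ℝ) ≤ g0 - 2*δ := by
    rw [hδdef]; nlinarith
  have habs_k : |(k:ℝ)| ≤ ε * (t:ℝ)^((2:ℝ)/3) := by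
    rw [abs_le]
    constructor
    · linarith
    · have : (k:ℝ) ≤ 0 := by exact_mod_cast hk2
      have hεt : 0 ≤ ε * (t:ℝ)^((2:ℝ)/3) := by positivity
      linarith
  have hNum : 3 * (g0 - 2*δ) * (X - (η/8) * X) ≤ ∑ i ∈ Finset.range (t+1), q i k := by
    have hsub : ∑ i ∈ Finset.Ico m (t+1), q i k ≤ ∑ i ∈ Finset.range (t+1), q i k := by
      rw [Finset.range_eq_Ico]
      refine Finset.sum_le_sum_of_subset_of_nonneg (Finset.Ico_subset_Ico (Nat.zero_le _) le_rfl)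
        fun i _ _ => (hq01 i k).1
    refine le_trans ?_ hsub
    have hterm : ∀ i ∈ Finset.Ico m (t+1), (g0 - 2*δ) * (1/(i:ℝ)^((2:ℝ)/3)) ≤ q i k := by
      intro i hi
      obtain ⟨hi1, hi2⟩ := Finset.mem_Ico.mp hi
      have hiN : N ≤ i := by omega
      have hi1' : 1 ≤ i := le_trans hm1 hi1
      have hip : (0:ℝ) < (i:ℝ)^((2:ℝ)/3) :=
        Real.rpow_pos_of_pos (by exact_mod_cast hi1') _
      have habs := hN i hiN k
      rw [abs_le] at habs
      -- g at the rescaled point is close to g0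
      have hiαt : α * t ≤ (i:ℝ) := by
        have : (m:ℝ) ≤ (i:ℝ) := by exact_mod_cast hi1
        linarith
      have hipow : α^((2:ℝ)/3) * (t:ℝ)^((2:ℝ)/3) ≤ (i:ℝ)^((2:ℝ)/3) := by
        rw [← Real.mul_rpow hα.le (by positivity)]
        exact Real.rpow_le_rpow (by positivity) hiαt (by norm_num)
      have hgnear : g0 - δ ≤ g ((k:ℝ) / (i:ℝ)^((2:ℝ)/3)) := by
        have hdist : |(k:ℝ) / (i:ℝ)^((2:ℝ)/3)| < c := by
          rw [abs_div, abs_of_pos hip]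
          rw [div_lt_iff₀ hip]
          have hc2 : ε * (t:ℝ)^((2:ℝ)/3) ≤ (c/2) * (i:ℝ)^((2:ℝ)/3) := by
            rw [hεdef]
            calc c/2 * α^((2:ℝ)/3) * (t:ℝ)^((2:ℝ)/3)
                = c/2 * (α^((2:ℝ)/3) * (t:ℝ)^((2:ℝ)/3)) := by ring
              _ ≤ c/2 * (i:ℝ)^((2:ℝ)/3) := by
                  apply mul_le_mul_of_nonneg_left hipow (by positivity)
          have : |(k:ℝ)| ≤ (c/2) * (i:ℝ)^((2:ℝ)/3) := le_trans habs_k hc2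
          nlinarith [hip]
        have := hcg ((k:ℝ) / (i:ℝ)^((2:ℝ)/3)) (by
          rw [Real.dist_eq, sub_zero]; exact hdist)
        rw [Real.dist_eq, ← hg0def, abs_lt] at this
        linarith [this.1]
      rw [mul_one_div, div_le_iff₀ hip]
      nlinarith [habs.1]
    calc 3 * (g0 - 2*δ) * (X - (η/8) * X)
        ≤ (g0 - 2*δ) * (3 * (((t:ℝ)+1)^((1:ℝ)/3) - (m:ℝ)^((1:ℝ)/3))) := by
          have hXt1 : X ≤ ((t:ℝ)+1)^((1:ℝ)/3) := by
            rw [hXdef]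
            exact Real.rpow_le_rpow (by positivity) (by linarith) (by norm_num)
          have hm13 : (m:ℝ)^((1:ℝ)/3) ≤ (η/8) * X := by
            rw [hXdef]
            have h1 : (m:ℝ)^((1:ℝ)/3) ≤ (2*α*(t:ℝ))^((1:ℝ)/3) :=
              Real.rpow_le_rpow (by positivity) hmR (by norm_num)
            have h2 : (2*α*(t:ℝ))^((1:ℝ)/3)
                = (2:ℝ)^((1:ℝ)/3) * α^((1:ℝ)/3) * ((t:ℝ)^((1:ℝ)/3)) := by
              rw [Real.mul_rpow (by positivity) (by positivity),
                Real.mul_rpow (by positivity) hα.le]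
            have h3 : α^((1:ℝ)/3) = η/16 := by
              rw [hαdef]; exact third_cancel (by positivity)
            have h4 : (2:ℝ)^((1:ℝ)/3) ≤ 2 := by
              calc (2:ℝ)^((1:ℝ)/3) ≤ (2:ℝ)^(1:ℝ) :=
                  Real.rpow_le_rpow_of_exponent_le one_le_two (by norm_num)
                _ = 2 := Real.rpow_one 2
            rw [h2, h3] at h1
            have hX0' : (0:ℝ) ≤ (t:ℝ)^((1:ℝ)/3) := Real.rpow_nonneg (by positivity) _
            calc (m:ℝ)^((1:ℝ)/3)
                ≤ (2:ℝ)^((1:ℝ)/3) * (η/16) * ((t:ℝ)^((1:ℝ)/3)) := h1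
              _ ≤ 2 * (η/16) * ((t:ℝ)^((1:ℝ)/3)) := by
                  apply mul_le_mul_of_nonneg_right _ hX0'
                  apply mul_le_mul_of_nonneg_right h4 (by positivity)
              _ = (η/8) * ((t:ℝ)^((1:ℝ)/3)) := by ring
          nlinarith [hg02δ]
      _ ≤ (g0 - 2*δ) * ∑ i ∈ Finset.Ico m (t+1), (1/(i:ℝ)^((2:ℝ)/3)) := by
          apply mul_le_mul_of_nonneg_left _ hg02δ
          exact num_sum m t hm1 (by omega)
      _ ≤ ∑ i ∈ Finset.Ico m (t+1), q i k := by
          rw [Finset.mul_sum]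
          exact Finset.sum_le_sum hterm
  -- denominator is at least 1
  have hDen1 : (1:ℝ) ≤ ∑ u ∈ Finset.range (t+1), q u 0 := by
    have h0 : q 0 0 = 1 := by
      rw [hqdef]
      have : {ω : Ω | (∑ j ∈ Finset.range 0, ξ j ω) = (0:ℤ)} = Set.univ := by
        ext ω; simp
      simp [this]
    calc (1:ℝ) = q 0 0 := h0.symm
      _ ≤ ∑ u ∈ Finset.range (t+1), q u 0 := by
          refine Finset.single_le_sum (fun u _ => (hq01 u 0).1) ?_
          simp
  -- final arithmetic
  have hfinal : (1 - η) * ∑ u ∈ Finset.range (t+1), q u 0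
      ≤ ∑ i ∈ Finset.range (t+1), q i k := by
    have hcoef : (1 - η) * ((N':ℝ) + 3 * (g0 + δ) * X)
        ≤ 3 * (g0 - 2*δ) * (X - (η/8) * X) := by
      have hB1X : (N':ℝ) ≤ 2 * g0 * η * X := by
        rw [hB1def] at hXB1
        rw [div_le_iff₀ (by positivity)] at hXB1
        linarith
      rw [hδdef]
      nlinarith [hB1X, mul_nonneg (mul_nonneg hg0.le hη.le) hX0, sq_nonneg η,
        mul_nonneg (mul_nonneg (mul_nonneg hg0.le hη.le) hη.le) hX0]
    calc (1 - η) * ∑ u ∈ Finset.range (t+1), q u 0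
        ≤ (1 - η) * ((N':ℝ) + 3 * (g0 + δ) * X) := by
          apply mul_le_mul_of_nonneg_left hDen (by linarith)
      _ ≤ 3 * (g0 - 2*δ) * (X - (η/8) * X) := hcoef
      _ ≤ ∑ i ∈ Finset.range (t+1), q i k := hNum
  have hHitR : 1 - η ≤ HitR := by
    have hDpos : (0:ℝ) < ∑ u ∈ Finset.range (t+1), q u 0 := by linarith
    exact le_of_mul_le_mul_right (le_trans hfinal hMarkov) hDpos
  exact ENNReal.ofReal_le_of_le_toReal hHitR
end
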